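/- arXiv:1405.1702 — 4 statements merged into one kernel-verified Lean document; each statement's English description precedes it below -/
import Mathlib

section
/- Let S be a nonempty set of vertices of the hypercube Q_d with |S| = s. Then the number of edges of Q_d with both endpoints in S is at most (s/2)·log₂ s. Equivalently (since Q_d is d-regular), the number of edges of Q_d with exactly one endpoint in S is at least s·(d − log₂ s). -/
open Finset Filter

noncomputable section
open scoped Classical

variable {V : Type*} [Fintype V] [DecidableEq V]

/-- Transition matrix of the simple random walk on a `d`-regular graph `G`:
from `u` the walk moves to a uniformly random neighbour. -/
def simpleStep (G : SimpleGraph V) (d : ℕ) : Matrix V V ℝ :=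
  Matrix.of fun u v => if G.Adj u v then ((d : ℝ))⁻¹ else 0

/-- Transition matrix of the lazy random walk `M = (1/2)(I + A/d)`. -/
def lazyStep (G : SimpleGraph V) (d : ℕ) : Matrix V V ℝ :=
  Matrix.of fun u v =>
    (if u = v then (2 : ℝ)⁻¹ else 0) + (2 : ℝ)⁻¹ * (if G.Adj u v then ((d : ℝ))⁻¹ else 0)

/-- Probability that the first `t` steps of the Markov chain with transition
matrix `M` started at `u` form a trajectory satisfying `E`:  the sum, over all
paths realizing the event, of the product of the transition probabilities. -/
def walkProb (M : Matrix V V ℝ) (u : V) (t : ℕ)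
    (E : (Fin (t + 1) → V) → Prop) : ℝ :=
  ∑ p : Fin (t + 1) → V,
    if p 0 = u ∧ E p then ∏ i : Fin t, M (p i.castSucc) (p i.succ) else 0

/-- The mixing time `T = min { t ≥ 1 : |M^t x y - 1/n| ≤ n⁻³ for all x,y }`. -/
def mixingTime (G : SimpleGraph V) (d : ℕ) : ℕ :=
  sInf {T : ℕ | 1 ≤ T ∧ ∀ x y : V,
    |((lazyStep G d) ^ T) x y - ((Fintype.card V : ℝ))⁻¹| ≤ (((Fintype.card V : ℝ)) ^ 3)⁻¹}

/-- Property P1: the second largest eigenvalue of the lazy walk matrix is at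
most `1 - g`, stated via the Rayleigh quotient on the orthogonal complement of
the constant (top) eigenvector. -/
def SpectralGapLB (G : SimpleGraph V) (d : ℕ) (g : ℝ) : Prop :=
  ∀ x : V → ℝ, (∑ v : V, x v) = 0 →
    (∑ u : V, ∑ v : V, x u * lazyStep G d u v * x v) ≤ (1 - g) * ∑ v : V, x v ^ 2

/-- Property P3 with constant `ρ₂`: for vertices `u,v` at distance at most
`d^ε`, the number of neighbours `w` of `v` with `dist w u ≤ dist u v` is at
most `ρ₂ · dist u v`. -/
def PropP3 (G : SimpleGraph V) (d : ℕ) (ε ρ₂ : ℝ) : Prop :=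
  ∀ u v : V, (G.dist u v : ℝ) ≤ (d : ℝ) ^ ε →
    (((univ : Finset V).filter fun w => G.Adj v w ∧ G.dist w u ≤ G.dist u v).card : ℝ) ≤
      ρ₂ * (G.dist u v : ℝ)

/-- The number of edges of `G` with both endpoints in `S`. -/
def edgesInside (G : SimpleGraph V) (S : Finset V) : ℕ :=
  ((S ×ˢ S).filter fun p => G.Adj p.1 p.2).card / 2

/-- The set of vertices of `G` not visited by the trajectory `p` at any step
`s` with `t₀ ≤ s` contains a connected (in the induced subgraph) subset of at
least `K` vertices; equivalently, the subgraph induced by this vacant set has a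
connected component with at least `K` vertices. -/
def bigVacantComponent (G : SimpleGraph V) {t : ℕ} (p : Fin (t + 1) → V)
    (t₀ : ℕ) (K : ℝ) : Prop :=
  ∃ S : Finset V, (∀ v ∈ S, ∀ s : Fin (t + 1), t₀ ≤ (s : ℕ) → p s ≠ v) ∧
    (G.induce (S : Set V)).Connected ∧ K ≤ (S.card : ℝ)


/-- The `d`-dimensional hypercube: vertices are `{0,1}^d`, two vertices are
adjacent iff they differ in exactly one coordinate (Hamming distance `1`). -/
def hypercube (d : ℕ) : SimpleGraph (Fin d → Bool) where
  Adj u v := hammingDist u v = 1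
  symm := by
    constructor
    intro u v h
    beta_reduce at *
    rwa [hammingDist_comm]
  loopless := by
    constructor
    intro u h
    beta_reduce at *
    rw [hammingDist_self] at h
    exact absurd h (by norm_num)

/-- The number of edges of `G` with exactly one endpoint in `S`. -/
def edgeBoundary (G : SimpleGraph V) (S : Finset V) : ℕ :=
  ((S ×ˢ Sᶜ).filter fun p => G.Adj p.1 p.2).card

lemma real_key (a b : ℝ) (hb : 0 ≤ b) (hba : b ≤ a) :
    a * Real.logb 2 a + b * Real.logb 2 b + 2 * b ≤ (a + b) * Real.logb 2 (a + b) := by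
  rcases eq_or_lt_of_le hb with rfl | hb0
  · simp
  have ha0 : 0 < a := lt_of_lt_of_le hb0 hba
  set f : ℝ → ℝ := fun x => x * Real.log x with hf
  have hconv := Real.convexOn_mul_log
  have h1 := hconv.secant_mono (a := b) (x := 2 * b) (y := a + b)
    (Set.mem_Ici.mpr (by positivity)) (Set.mem_Ici.mpr (by positivity))
    (Set.mem_Ici.mpr (by positivity))
    (by intro h; nlinarith) (by intro h; nlinarith) (by linarith)
  have h2 := hconv.secant_mono (a := a + b) (x := b) (y := a)
    (Set.mem_Ici.mpr (by positivity)) (Set.mem_Ici.mpr (by positivity))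
    (Set.mem_Ici.mpr (by positivity))
    (by intro h; nlinarith) (by intro h; nlinarith) hba
  have e1 : 2 * b - b = b := by ring
  have e2 : a + b - b = a := by ring
  have e3 : b - (a + b) = -a := by ring
  have e4 : a - (a + b) = -b := by ring
  rw [e1, e2] at h1
  rw [e3, e4] at h2
  have t2 : (f (a+b) - f b)/a ≤ (f (a+b) - f a)/b := by
    rw [show f (a+b) - f b = -(f b - f (a+b)) by ring,
        show f (a+b) - f a = -(f a - f (a+b)) by ring, neg_div, neg_div]
    rw [div_neg, div_neg, neg_le_neg_iff] at h2
    linarith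
  have key : f (2 * b) - f b ≤ f (a + b) - f a := by
    have chain : (f (2*b) - f b)/b ≤ (f (a+b) - f a)/b := le_trans h1 t2
    calc f (2*b) - f b = ((f (2*b) - f b)/b) * b := by field_simp
      _ ≤ ((f (a+b) - f a)/b) * b := mul_le_mul_of_nonneg_right chain (le_of_lt hb0)
      _ = f (a+b) - f a := by field_simp
  have hlog2b : Real.log (2 * b) = Real.log 2 + Real.log b :=
    Real.log_mul two_ne_zero (ne_of_gt hb0)
  have target' : a * Real.log a + b * Real.log b + 2*b*Real.log 2 ≤ (a+b) * Real.log (a+b) := by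
    have hexp : f (2*b) = 2*b*Real.log 2 + 2*b*Real.log b := by
      simp only [hf]; rw [hlog2b]; ring
    simp only [hf] at key
    nlinarith [key, hexp]
  have L0 : (0:ℝ) < Real.log 2 := Real.log_pos one_lt_two
  rw [Real.logb, Real.logb, Real.logb,
    show a * (Real.log a / Real.log 2) + b * (Real.log b / Real.log 2) + 2*b
      = (a * Real.log a + b * Real.log b + 2*b*Real.log 2)/Real.log 2 by field_simp,
    show (a+b) * (Real.log (a+b) / Real.log 2) = ((a+b) * Real.log (a+b))/Real.log 2 by ring]
  gcongr

lemma hyp_adj {d : ℕ} (u v : Fin d → Bool) :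
    (hypercube d).Adj u v ↔ hammingDist u v = 1 := Iff.rfl

lemma hammingDist_cons {d : ℕ} (x y : Bool) (u v : Fin d → Bool) :
    hammingDist (Fin.cons x u : Fin (d+1) → Bool) (Fin.cons y v)
      = (if x = y then 0 else 1) + hammingDist u v := by
  simp only [hammingDist, Finset.card_filter]
  rw [Fin.sum_univ_succ]
  simp [Fin.cons_zero, Fin.cons_succ, add_comm, eq_comm]

lemma adj_cons {d : ℕ} (x y : Bool) (u v : Fin d → Bool) :
    (hypercube (d+1)).Adj (Fin.cons x u) (Fin.cons y v)
      ↔ ((x = y ∧ (hypercube d).Adj u v) ∨ (x ≠ y ∧ u = v)) := by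
  rw [hyp_adj, hyp_adj, hammingDist_cons]
  by_cases h : x = y
  · simp [h]
  · simp [h, hammingDist_eq_zero]

lemma hyp_deg {d : ℕ} (u : Fin d → Bool) :
    (univ.filter fun v => (hypercube d).Adj u v).card = d := by
  have himg : univ.filter (fun v => (hypercube d).Adj u v)
      = Finset.image (fun i : Fin d => Function.update u i (!(u i))) univ := by
    ext v
    simp only [mem_filter, mem_univ, true_and, Finset.mem_image, hyp_adj]
    constructor
    · intro hv
      obtain ⟨i, hi⟩ := Finset.card_eq_one.mp hv
      refine ⟨i, ?_⟩
      have hmem : ∀ j, u j ≠ v j ↔ j = i := by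
        intro j
        constructor
        · intro hj
          have : j ∈ ({i} : Finset (Fin d)) := hi ▸ (by simp [hj])
          simpa using this
        · rintro rfl
          have : j ∈ univ.filter (fun k => u k ≠ v k) := hi ▸ Finset.mem_singleton_self j
          simpa using this
      funext j
      by_cases hji : j = i
      · subst hji
        have : u j ≠ v j := (hmem j).mpr rfl
        rw [Function.update_self]
        cases hu : u j <;> cases hv' : v j <;> simp_all
      · rw [Function.update_of_ne hji]
        by_contra hne
        exact hji ((hmem j).mp hne)
    · rintro ⟨i, rfl⟩
      have : univ.filter (fun j => u j ≠ Function.update u i (!(u i)) j) = {i} := by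
        ext j
        by_cases hji : j = i
        · subst hji; simp [Function.update_self]
        · simp [hji, Function.update_of_ne hji]
      rw [hammingDist, this, Finset.card_singleton]
  rw [himg, Finset.card_image_of_injective _ ?_, Finset.card_univ, Fintype.card_fin]
  intro i j hij
  by_contra hne
  have := congrFun hij i
  simp only [Function.update_self, Function.update_of_ne hne] at this
  exact (Bool.not_ne_self (u i)) this

variable {V : Type*} [Fintype V] [DecidableEq V]

def Fcnt (G : SimpleGraph V) (S : Finset V) : ℕ :=
  ((S ×ˢ S).filter fun p => G.Adj p.1 p.2).card

lemma Fcnt_eq_sum (G : SimpleGraph V) (S : Finset V) :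
    Fcnt G S = ∑ u : V, ∑ v : V, if u ∈ S ∧ v ∈ S ∧ G.Adj u v then 1 else 0 := by
  rw [Fcnt, Finset.card_filter, Finset.sum_product]
  symm
  calc ∑ u : V, ∑ v : V, (if u ∈ S ∧ v ∈ S ∧ G.Adj u v then (1:ℕ) else 0)
      = ∑ u : V, if u ∈ S then (∑ v : V, if v ∈ S ∧ G.Adj u v then 1 else 0) else 0 := by
        apply Finset.sum_congr rfl
        intro u _
        by_cases hu : u ∈ S <;> simp [hu]
    _ = ∑ u ∈ S, (∑ v : V, if v ∈ S ∧ G.Adj u v then (1:ℕ) else 0) := by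
        rw [Finset.sum_ite_mem, Finset.univ_inter]
    _ = ∑ u ∈ S, ∑ v ∈ S, (if G.Adj u v then (1:ℕ) else 0) := by
        apply Finset.sum_congr rfl
        intro u _
        calc ∑ v : V, (if v ∈ S ∧ G.Adj u v then (1:ℕ) else 0)
            = ∑ v : V, if v ∈ S then (if G.Adj u v then (1:ℕ) else 0) else 0 := by
              apply Finset.sum_congr rfl; intro v _
              by_cases hv : v ∈ S <;> simp [hv]
          _ = _ := by rw [Finset.sum_ite_mem, Finset.univ_inter]

lemma card_eq_sum_ind (S : Finset V) :
    S.card = ∑ u : V, if u ∈ S then 1 else 0 := by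
  rw [Finset.sum_ite_mem, Finset.univ_inter, Finset.card_eq_sum_ones]

lemma sum_split {d : ℕ} {M : Type*} [AddCommMonoid M] (g : (Fin (d+1) → Bool) → M) :
    ∑ u, g u = (∑ u : Fin d → Bool, g (Fin.cons true u)) + ∑ u : Fin d → Bool, g (Fin.cons false u) := by
  rw [← Equiv.sum_comp (Fin.consEquiv (fun _ : Fin (d+1) => Bool)), Fintype.sum_prod_type,
    Fintype.sum_bool]
  simp [Fin.consEquiv]

lemma cross_sum {V : Type*} [Fintype V] [DecidableEq V] (A B : Finset V) :
    (∑ u : V, ∑ v : V, if u ∈ A ∧ v ∈ B ∧ u = v then (1:ℕ) else 0) = (A ∩ B).card := by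
  rw [card_eq_sum_ind]
  apply Finset.sum_congr rfl
  intro u _
  have hv : ∀ v : V, (if u ∈ A ∧ v ∈ B ∧ u = v then (1:ℕ) else 0)
      = if u = v then (if u ∈ A ∧ u ∈ B then 1 else 0) else 0 := by
    intro v
    by_cases h : u = v
    · subst h; by_cases hA : u ∈ A <;> simp [hA]
    · simp [h]
  rw [Finset.sum_congr rfl fun v _ => hv v, Finset.sum_ite_eq]
  simp [Finset.mem_inter]

lemma main_bound : ∀ (d : ℕ) (S : Finset (Fin d → Bool)),
    (Fcnt (hypercube d) S : ℝ) ≤ (S.card : ℝ) * Real.logb 2 (S.card : ℝ) := by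
  intro d
  induction d with
  | zero =>
    intro S
    have hF : Fcnt (hypercube 0) S = 0 := by
      rw [Fcnt, Finset.card_eq_zero, Finset.filter_eq_empty_iff]
      intro p _
      intro hadj
      have h1 : hammingDist p.1 p.2 = 1 := hadj
      have h2 := hammingDist_le_card_fintype (x := p.1) (y := p.2)
      rw [h1] at h2
      simpa using h2
    have hcard : S.card ≤ 1 := by
      have := Finset.card_le_univ S
      simpa using this
    interval_cases h : S.card <;> simp [hF]
  | succ d ih =>
    intro S
    set S0 : Finset (Fin d → Bool) := univ.filter (fun u => Fin.cons false u ∈ S) with hS0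
    set S1 : Finset (Fin d → Bool) := univ.filter (fun u => Fin.cons true u ∈ S) with hS1
    have e := Fin.consEquiv (fun _ : Fin (d+1) => Bool)
    -- membership lemmas
    have m0 : ∀ u, u ∈ S0 ↔ Fin.cons false u ∈ S := by intro u; simp [hS0]
    have m1 : ∀ u, u ∈ S1 ↔ Fin.cons true u ∈ S := by intro u; simp [hS1]
    -- cardinality split
    have hcard : S.card = S1.card + S0.card := by
      rw [card_eq_sum_ind S, ← Equiv.sum_comp (Fin.consEquiv (fun _ : Fin (d+1) => Bool))]
      rw [Fintype.sum_prod_type, Fintype.sum_bool]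
      rw [card_eq_sum_ind S0, card_eq_sum_ind S1]
      congr 1 <;> apply Finset.sum_congr rfl <;> intro u _
      · simp [Fin.consEquiv, m1 u]; congr
      · simp [Fin.consEquiv, m0 u]; congr
    have hdecomp : Fcnt (hypercube (d+1)) S
        = (Fcnt (hypercube d) S1 + (S1 ∩ S0).card) + ((S0 ∩ S1).card + Fcnt (hypercube d) S0) := by
      rw [Fcnt_eq_sum, sum_split]
      rw [Finset.sum_congr rfl fun u _ => sum_split
        (fun v => if Fin.cons true u ∈ S ∧ v ∈ S ∧ (hypercube (d+1)).Adj (Fin.cons true u) v then (1:ℕ) else 0)]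
      rw [Finset.sum_add_distrib]
      rw [Finset.sum_congr rfl fun u _ => sum_split
        (fun v => if Fin.cons false u ∈ S ∧ v ∈ S ∧ (hypercube (d+1)).Adj (Fin.cons false u) v then (1:ℕ) else 0)]
      rw [Finset.sum_add_distrib]
      congr 1
      · congr 1
        · rw [Fcnt_eq_sum]
          apply Finset.sum_congr rfl; intro u _
          apply Finset.sum_congr rfl; intro v _
          have := adj_cons true true u v
          simp only [this]
          by_cases h1 : u ∈ S1 <;> by_cases h2 : v ∈ S1 <;>
            simp [h1, h2, ← m1 u, ← m1 v]
        · rw [← cross_sum S1 S0]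
          apply Finset.sum_congr rfl; intro u _
          apply Finset.sum_congr rfl; intro v _
          have := adj_cons true false u v
          simp only [this]
          by_cases h1 : u ∈ S1 <;> by_cases h2 : v ∈ S0 <;>
            simp [h1, h2, ← m1 u, ← m0 v]
      · congr 1
        · rw [← cross_sum S0 S1]
          apply Finset.sum_congr rfl; intro u _
          apply Finset.sum_congr rfl; intro v _
          have := adj_cons false true u v
          simp only [this]
          by_cases h1 : u ∈ S0 <;> by_cases h2 : v ∈ S1 <;>
            simp [h1, h2, ← m0 u, ← m1 v]
        · rw [Fcnt_eq_sum]
          apply Finset.sum_congr rfl; intro u _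
          apply Finset.sum_congr rfl; intro v _
          have := adj_cons false false u v
          simp only [this]
          by_cases h1 : u ∈ S0 <;> by_cases h2 : v ∈ S0 <;>
            simp [h1, h2, ← m0 u, ← m0 v]
    have hc10a : (S1 ∩ S0).card ≤ S0.card := Finset.card_le_card Finset.inter_subset_right
    have hc10b : (S1 ∩ S0).card ≤ S1.card := Finset.card_le_card Finset.inter_subset_left
    have hc01a : (S0 ∩ S1).card ≤ S0.card := Finset.card_le_card Finset.inter_subset_left
    have hc01b : (S0 ∩ S1).card ≤ S1.card := Finset.card_le_card Finset.inter_subset_right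
    have h0 := ih S0
    have h1 := ih S1
    rw [hdecomp, hcard]
    push_cast
    rcases le_total S0.card S1.card with hle | hle
    · have hk := real_key (S1.card : ℝ) (S0.card : ℝ) (by positivity) (by exact_mod_cast hle)
      have c1 : ((S1 ∩ S0).card : ℝ) ≤ (S0.card : ℝ) := by exact_mod_cast hc10a
      have c0 : ((S0 ∩ S1).card : ℝ) ≤ (S0.card : ℝ) := by exact_mod_cast hc01a
      linarith
    · have hk := real_key (S0.card : ℝ) (S1.card : ℝ) (by positivity) (by exact_mod_cast hle)
      have c1 : ((S1 ∩ S0).card : ℝ) ≤ (S1.card : ℝ) := by exact_mod_cast hc10b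
      have c0 : ((S0 ∩ S1).card : ℝ) ≤ (S1.card : ℝ) := by exact_mod_cast hc01b
      rw [show ((S1.card:ℝ) + (S0.card:ℝ)) = ((S0.card:ℝ) + (S1.card:ℝ)) from by ring]
      linarith


lemma prod_filter_card {V : Type*} [Fintype V] [DecidableEq V] (S T : Finset V) (P : V → V → Prop) :
    ((S ×ˢ T).filter fun p => P p.1 p.2).card = ∑ u ∈ S, (T.filter (P u)).card := by
  rw [Finset.card_filter, Finset.sum_product]
  exact Finset.sum_congr rfl fun u _ => (Finset.card_filter _ _).symm

lemma Fcnt_add_boundary {V : Type*} [Fintype V] [DecidableEq V] (G : SimpleGraph V) (S : Finset V) :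
    Fcnt G S + edgeBoundary G S = ∑ u ∈ S, (univ.filter (G.Adj u)).card := by
  rw [Fcnt, edgeBoundary, prod_filter_card, prod_filter_card, ← Finset.sum_add_distrib]
  apply Finset.sum_congr rfl
  intro u _
  rw [← Finset.card_union_of_disjoint
      (Finset.disjoint_filter_filter disjoint_compl_right),
      ← Finset.filter_union, Finset.union_compl]

lemma hyp_count (d : ℕ) (S : Finset (Fin d → Bool)) :
    Fcnt (hypercube d) S + edgeBoundary (hypercube d) S = S.card * d := by
  rw [Fcnt_add_boundary]
  rw [Finset.sum_congr rfl fun u _ => hyp_deg u]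
  rw [Finset.sum_const, smul_eq_mul]

/-- Edge-isoperimetric inequality for the hypercube (Hart/Harper): a nonempty
set `S` of `s` vertices of `Q_d` spans at most `(s/2)·log₂ s` edges;
equivalently, since `Q_d` is `d`-regular, at least `s·(d - log₂ s)` edges join
`S` to its complement. -/
theorem hypercube_edge_isoperimetry (d : ℕ) (S : Finset (Fin d → Bool))
    (hS : S.Nonempty) :
    (edgesInside (hypercube d) S : ℝ) ≤ (S.card : ℝ) / 2 * Real.logb 2 (S.card : ℝ) ∧
    (S.card : ℝ) * ((d : ℝ) - Real.logb 2 (S.card : ℝ)) ≤ (edgeBoundary (hypercube d) S : ℝ) := by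
  have hmb := main_bound d S
  have hdeg := hyp_count d S
  constructor
  · calc (edgesInside (hypercube d) S : ℝ)
        = ((Fcnt (hypercube d) S / 2 : ℕ) : ℝ) := rfl
      _ ≤ (Fcnt (hypercube d) S : ℝ) / 2 := Nat.cast_div_le
      _ ≤ ((S.card : ℝ) * Real.logb 2 (S.card : ℝ)) / 2 := by linarith
      _ = (S.card : ℝ) / 2 * Real.logb 2 (S.card : ℝ) := by ring
  · have hB : (edgeBoundary (hypercube d) S : ℝ)
        = (S.card : ℝ) * d - (Fcnt (hypercube d) S : ℝ) := by
      have := congrArg (fun n : ℕ => (n : ℝ)) hdeg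
      push_cast at this
      linarith
    rw [hB, mul_sub]
    linarith


end
end

section
/- Let G be a d-regular simple graph, let v be a vertex of G, and let s ≥ 1. Then the number of vertex subsets S with v ∈ S, |S| = s, and such that the subgraph of G induced by S is connected, is at most (e·d)^{s−1}, where e is Euler's number. -/
open Finset Filter

noncomputable section
open scoped Classical

variable {V : Type*} [Fintype V] [DecidableEq V]

set_option linter.unusedSectionVars false

namespace CCSAux

/-! ### Codes -/

/-- Sum of cardinalities of the entries of a code. -/
def sumCards {d : ℕ} (c : List (Finset (Fin d))) : ℕ := (c.map Finset.card).sum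

/-- Łukasiewicz condition: total is `length - 1`, every proper prefix has
sum of cards at least its length. -/
def Lk {d : ℕ} (c : List (Finset (Fin d))) : Prop :=
  sumCards c + 1 = c.length ∧
    ∀ p, p <+: c → p.length < c.length → p.length ≤ sumCards p

lemma sumCards_append {d : ℕ} (a b : List (Finset (Fin d))) :
    sumCards (a ++ b) = sumCards a + sumCards b := by
  simp [sumCards]

lemma sumCards_take_add_drop {d : ℕ} (c : List (Finset (Fin d))) (n : ℕ) :
    sumCards (c.take n) + sumCards (c.drop n) = sumCards c := by
  rw [← sumCards_append, List.take_append_drop]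

/-- Cycle lemma, uniqueness part: a rotation of an `Lk` code by `0 < j < length`
is never `Lk`. -/
lemma not_Lk_rotate {d : ℕ} {c : List (Finset (Fin d))} (hc : Lk c) {j : ℕ}
    (hj0 : 0 < j) (hjl : j < c.length) : ¬ Lk (c.rotate j) := by
  rintro ⟨ht, hp⟩
  have hrot : c.rotate j = c.drop j ++ c.take j :=
    List.rotate_eq_drop_append_take hjl.le
  -- `c.take j` is a proper prefix of `c`
  have h1 : j ≤ sumCards (c.take j) := by
    have := hc.2 (c.take j) (List.take_prefix _ _) ?_
    · simpa [List.length_take, Nat.min_eq_left hjl.le] using this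
    · rw [List.length_take]
      omega
  -- `c.drop j` is a proper prefix of `c.rotate j`
  have h2 : c.length - j ≤ sumCards (c.drop j) := by
    have hpre : c.drop j <+: c.rotate j := hrot ▸ (c.drop j).prefix_append _
    have hlen : (c.drop j).length < (c.rotate j).length := by
      simp [List.length_drop, List.length_rotate]
      omega
    have := hp _ hpre hlen
    simpa [List.length_drop] using this
  have h3 : sumCards (c.take j) + sumCards (c.drop j) = sumCards c :=
    sumCards_take_add_drop c j
  have h4 := hc.1
  omega

lemma Lk_rotate_inj {d : ℕ} {c c' : List (Finset (Fin d))} (hc : Lk c) (hc' : Lk c')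
    {k k' : ℕ} (hk : k < c.length) (hk' : k' < c.length) (hlen : c'.length = c.length)
    (h : c.rotate k = c'.rotate k') : c = c' ∧ k = k' := by
  have hL : 0 < c.length := lt_of_le_of_lt (Nat.zero_le _) hk
  -- c' = c.rotate ((k + (length - k')) % length)
  have key : ∀ (a b : List (Finset (Fin d))), Lk a → Lk b → b.length = a.length →
      ∀ j, j < a.length → a.rotate j = b → a = b ∧ j = 0 := by
    intro a b ha hb hab j hj hrot
    rcases Nat.eq_zero_or_pos j with rfl | hjpos
    · simpa using hrot
    · exact absurd (hrot ▸ hb) (not_Lk_rotate ha hjpos hj)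
  have h2 : c.rotate ((k + (c.length - k')) % c.length) = c' := by
    rw [List.rotate_mod, ← List.rotate_rotate]
    rw [h, List.rotate_rotate]
    have : k' + (c.length - k') = c.length := by omega
    rw [this, ← hlen, List.rotate_length]
  obtain ⟨hcc, hj⟩ := key c c' hc hc' hlen _ (Nat.mod_lt _ hL) h2
  subst hcc
  constructor
  · rfl
  · -- (k + (length - k')) % length = 0  →  k = k'
    have hdvd : c.length ∣ (k + (c.length - k')) := Nat.dvd_of_mod_eq_zero hj
    obtain ⟨m, hm⟩ := hdvd
    -- k + (length - k') = length * m, with k < length, k' < length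
    rcases m with _ | _ | m
    · omega
    · omega
    · exfalso
      have h5 : c.length * 2 ≤ c.length * (m + 1 + 1) :=
        Nat.mul_le_mul_left _ (by omega)
      omega


/-! ### Counting codes -/

lemma ofFn_get_cast {α : Type*} {s : ℕ} (l : List α) (h : l.length = s) :
    List.ofFn (fun i : Fin s => l.get (Fin.cast h.symm i)) = l := by
  subst h
  simpa using List.ofFn_get l

/-- Codes whose associated list satisfies the Łukasiewicz condition. -/
def OkCode (s d : ℕ) (f : Fin s → Finset (Fin d)) : Prop := Lk (List.ofFn f)

/-- Codes with total cardinality `s - 1`. -/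
def TotCode (s d : ℕ) (f : Fin s → Finset (Fin d)) : Prop :=
  sumCards (List.ofFn f) + 1 = s

lemma card_ok_mul (s d : ℕ) :
    Fintype.card {f : Fin s → Finset (Fin d) // OkCode s d f} * s ≤
      Fintype.card {f : Fin s → Finset (Fin d) // TotCode s d f} := by
  have hlen : ∀ (f : Fin s → Finset (Fin d)) (k : ℕ),
      ((List.ofFn f).rotate k).length = s := by
    intro f k
    simp
  set Φ : {f : Fin s → Finset (Fin d) // OkCode s d f} × Fin s →
      {f : Fin s → Finset (Fin d) // TotCode s d f} := fun z =>
    ⟨fun i => ((List.ofFn z.1.1).rotate z.2.1).get (Fin.cast (hlen z.1.1 z.2.1).symm i), by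
      have hof : List.ofFn (fun i =>
          ((List.ofFn z.1.1).rotate z.2.1).get (Fin.cast (hlen z.1.1 z.2.1).symm i)) =
          (List.ofFn z.1.1).rotate z.2.1 := ofFn_get_cast _ (hlen z.1.1 z.2.1)
      unfold TotCode
      rw [hof]
      have hperm : List.Perm (((List.ofFn z.1.1).rotate z.2.1).map Finset.card)
          ((List.ofFn z.1.1).map Finset.card) :=
        ((List.ofFn z.1.1).rotate_perm z.2.1).map _
      have hsum : sumCards ((List.ofFn z.1.1).rotate z.2.1) = sumCards (List.ofFn z.1.1) :=
        hperm.sum_eq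
      rw [hsum]
      have := z.1.2.1
      simpa using this⟩ with hΦ
  have hinj : Function.Injective Φ := by
    rintro ⟨⟨f, hf⟩, k⟩ ⟨⟨f', hf'⟩, k'⟩ h
    have hfun : (fun i => ((List.ofFn f).rotate k.1).get (Fin.cast (hlen f k.1).symm i))
        = (fun i => ((List.ofFn f').rotate k'.1).get (Fin.cast (hlen f' k'.1).symm i)) := by
      have := congrArg Subtype.val h
      exact this
    have h2 : (List.ofFn f).rotate k.1 = (List.ofFn f').rotate k'.1 := by
      rw [← ofFn_get_cast ((List.ofFn f).rotate k.1) (hlen f k.1),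
        ← ofFn_get_cast ((List.ofFn f').rotate k'.1) (hlen f' k'.1), hfun]
    have hkl : k.1 < (List.ofFn f).length := by simpa using k.2
    have hkl' : k'.1 < (List.ofFn f).length := by simpa using k'.2
    have hll : (List.ofFn f').length = (List.ofFn f).length := by simp
    obtain ⟨hcc, hkk⟩ := Lk_rotate_inj hf hf' hkl hkl' hll h2
    have hff : f = f' := List.ofFn_injective hcc
    subst hff
    have hkk2 : k = k' := Fin.ext hkk
    subst hkk2
    rfl
  have := Fintype.card_le_of_injective Φ hinj
  simpa [Fintype.card_prod, Fintype.card_fin] using this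

lemma card_tot_le (s d : ℕ) :
    Fintype.card {f : Fin s → Finset (Fin d) // TotCode s d f} ≤ (s * d).choose (s - 1) := by
  classical
  rcases Nat.eq_zero_or_pos s with rfl | hs
  · -- s = 0 : TotCode is impossible
    have : IsEmpty {f : Fin 0 → Finset (Fin d) // TotCode 0 d f} := by
      constructor
      rintro ⟨f, hf⟩
      unfold TotCode at hf
      omega
    simp [Fintype.card_eq_zero]
  set Ψ : {f : Fin s → Finset (Fin d) // TotCode s d f} →
      {A : Finset (Fin s × Fin d) // A.card = s - 1} := fun f =>
    ⟨Finset.univ.filter (fun p : Fin s × Fin d => p.2 ∈ f.1 p.1), by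
      have hcard : (Finset.univ.filter (fun p : Fin s × Fin d => p.2 ∈ f.1 p.1)).card
          = ∑ i : Fin s, (f.1 i).card := by
        rw [Finset.card_eq_sum_card_fiberwise
          (f := Prod.fst) (t := Finset.univ) (fun x _ => Finset.mem_univ _)]
        refine Finset.sum_congr rfl (fun i _ => ?_)
        have : (Finset.univ.filter (fun p : Fin s × Fin d => p.2 ∈ f.1 p.1)).filter
            (fun p => p.1 = i) = (f.1 i).map ⟨fun a => (i, a), fun a b hab => by
              simpa using hab⟩ := by
          ext ⟨x, y⟩
          simp only [Finset.mem_filter, Finset.mem_univ, true_and, Finset.mem_map,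
            Function.Embedding.coeFn_mk, Prod.mk.injEq]
          constructor
          · rintro ⟨hy, rfl⟩
            exact ⟨y, hy, rfl⟩
          · rintro ⟨a, ha, rfl, rfl⟩
            exact ⟨ha, rfl⟩
        rw [this, Finset.card_map]
      have hf := f.2
      unfold TotCode at hf
      have hsum : sumCards (List.ofFn f.1) = ∑ i : Fin s, (f.1 i).card := by
        unfold sumCards
        rw [List.map_ofFn, List.sum_ofFn]
        rfl
      rw [hcard, ← hsum]
      omega⟩ with hΨ
  have hinj : Function.Injective Ψ := by
    rintro ⟨f, hf⟩ ⟨f', hf'⟩ h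
    simp only [hΨ, Subtype.mk.injEq] at h
    refine Subtype.ext (funext fun i => Finset.ext fun a => ?_)
    have := Finset.ext_iff.1 h (i, a)
    simpa using this
  have hc := Fintype.card_le_of_injective Ψ hinj
  rw [Fintype.card_finset_len] at hc
  simpa using hc

/-! ### Arithmetic -/

lemma pow_le_exp_factorial : ∀ m : ℕ, ((m + 1 : ℕ) : ℝ) ^ m ≤
    Real.exp 1 ^ m * (Nat.factorial (m + 1) : ℝ) := by
  intro m
  induction m with
  | zero => simp
  | succ m ih =>
    have hx : (0 : ℝ) < (m + 1 : ℝ) := by positivity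
    have hkey : ((m + 2 : ℕ) : ℝ) ^ (m + 1) ≤
        ((m + 2 : ℕ) : ℝ) * Real.exp 1 * ((m + 1 : ℕ) : ℝ) ^ m := by
      have hq : ((m + 2 : ℝ) / (m + 1)) ^ (m + 1) ≤ Real.exp 1 := by
        have h1 : (m + 2 : ℝ) / (m + 1) = 1 + 1 / (m + 1) := by
          field_simp
          ring
        have h2 : (1 : ℝ) + 1 / (m + 1) ≤ Real.exp (1 / (m + 1)) := by
          have := Real.add_one_le_exp (1 / (m + 1 : ℝ))
          linarith
        have h3 : ((m + 2 : ℝ) / (m + 1)) ^ (m + 1) ≤ Real.exp (1 / (m + 1)) ^ (m + 1) := by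
          apply pow_le_pow_left₀ (by positivity) (h1 ▸ h2)
        refine h3.trans ?_
        rw [← Real.exp_nat_mul]
        apply Real.exp_le_exp.2
        rw [mul_one_div]
        apply div_le_one_of_le₀ <;> push_cast <;> linarith
      have hsplit : ((m + 2 : ℕ) : ℝ) ^ (m + 1) =
          ((m + 2 : ℝ) / (m + 1)) ^ (m + 1) * ((m + 1 : ℝ)) ^ (m + 1) := by
        rw [← mul_pow]
        congr 1
        push_cast
        field_simp
      rw [hsplit]
      have h4 : ((m + 2 : ℝ) / (m + 1)) ^ (m + 1) * ((m + 1 : ℝ)) ^ (m + 1) ≤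
          Real.exp 1 * ((m + 1 : ℝ)) ^ (m + 1) := by
        apply mul_le_mul_of_nonneg_right hq (by positivity)
      refine h4.trans ?_
      have : ((m + 1 : ℝ)) ^ (m + 1) = (m + 1 : ℝ) * ((m + 1 : ℕ) : ℝ) ^ m := by
        push_cast
        ring
      rw [this]
      push_cast
      nlinarith [pow_nonneg (le_of_lt hx) m, Real.exp_pos 1]
    refine hkey.trans ?_
    have he : (0 : ℝ) ≤ Real.exp 1 := (Real.exp_pos 1).le
    have h5 : ((m + 2 : ℕ) : ℝ) * Real.exp 1 * ((m + 1 : ℕ) : ℝ) ^ m ≤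
        ((m + 2 : ℕ) : ℝ) * Real.exp 1 * (Real.exp 1 ^ m * (Nat.factorial (m + 1) : ℝ)) := by
      apply mul_le_mul_of_nonneg_left ih (by positivity)
    refine h5.trans ?_
    rw [Nat.factorial_succ (m + 1)]
    push_cast
    ring_nf
    have hfp : (0:ℝ) ≤ (Nat.factorial (m+1) : ℝ) := by positivity
    nlinarith [pow_nonneg he m, Real.exp_pos 1, hfp]

lemma choose_le_main (s d : ℕ) (hs : 1 ≤ s) :
    (((s * d).choose (s - 1) : ℕ) : ℝ) ≤ (s : ℝ) * (Real.exp 1 * (d : ℝ)) ^ (s - 1) := by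
  obtain ⟨m, rfl⟩ : ∃ m, s = m + 1 := ⟨s - 1, by omega⟩
  simp only [Nat.add_sub_cancel]
  have h1 : ((m + 1) * d).choose m * Nat.factorial m ≤ ((m + 1) * d) ^ m := by
    calc ((m + 1) * d).choose m * Nat.factorial m
        = Nat.factorial m * ((m + 1) * d).choose m := by ring
      _ = ((m + 1) * d).descFactorial m := (Nat.descFactorial_eq_factorial_mul_choose _ _).symm
      _ ≤ ((m + 1) * d) ^ m := Nat.descFactorial_le_pow _ _
  have h1' : (((m + 1) * d).choose m : ℝ) * (Nat.factorial m : ℝ) ≤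
      ((m + 1 : ℕ) : ℝ) ^ m * (d : ℝ) ^ m := by
    have := Nat.cast_le (α := ℝ) |>.2 h1
    push_cast at this ⊢
    calc (((m + 1) * d).choose m : ℝ) * (Nat.factorial m : ℝ) ≤ (((m:ℝ) + 1) * d) ^ m := this
      _ = ((m : ℝ) + 1) ^ m * (d : ℝ) ^ m := by rw [mul_pow]
  have h2 : ((m + 1 : ℕ) : ℝ) ^ m ≤ Real.exp 1 ^ m * (Nat.factorial (m + 1) : ℝ) :=
    pow_le_exp_factorial m
  have h3 : (Nat.factorial (m + 1) : ℝ) = ((m : ℝ) + 1) * (Nat.factorial m : ℝ) := by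
    rw [Nat.factorial_succ]
    push_cast
    ring
  have hfac : (0 : ℝ) < (Nat.factorial m : ℝ) := by
    exact_mod_cast (Nat.factorial_pos m)
  have hd : (0 : ℝ) ≤ (d : ℝ) ^ m := by positivity
  have key : (((m + 1) * d).choose m : ℝ) * (Nat.factorial m : ℝ) ≤
      (((m:ℝ) + 1) * (Real.exp 1 * d) ^ m) * (Nat.factorial m : ℝ) := by
    calc (((m + 1) * d).choose m : ℝ) * (Nat.factorial m : ℝ)
        ≤ ((m + 1 : ℕ) : ℝ) ^ m * (d : ℝ) ^ m := h1'
      _ ≤ (Real.exp 1 ^ m * (Nat.factorial (m + 1) : ℝ)) * (d : ℝ) ^ m :=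
          mul_le_mul_of_nonneg_right h2 hd
      _ = (((m:ℝ) + 1) * (Real.exp 1 * d) ^ m) * (Nat.factorial m : ℝ) := by
          rw [h3, mul_pow]
          ring
  have := le_of_mul_le_mul_right (by linarith [key] : (((m + 1) * d).choose m : ℝ) * (Nat.factorial m : ℝ) ≤ (((m:ℝ) + 1) * (Real.exp 1 * d) ^ m) * (Nat.factorial m : ℝ)) hfac
  push_cast
  push_cast at this
  linarith



set_option linter.unusedSectionVars false


/-! ### Neighbour indexing -/

/-- Enumeration of the neighbours of a vertex in a `d`-regular graph. -/
def nbr (G : SimpleGraph V) {d : ℕ} (hreg : G.IsRegularOfDegree d) (u : V) (i : Fin d) : V :=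
  ((G.neighborFinset u).equivFinOfCardEq (hreg u)).symm i

lemma nbr_adj (G : SimpleGraph V) {d : ℕ} (hreg : G.IsRegularOfDegree d) (u : V) (i : Fin d) :
    G.Adj u (nbr G hreg u i) := by
  have := ((G.neighborFinset u).equivFinOfCardEq (hreg u)).symm i |>.2
  rwa [SimpleGraph.mem_neighborFinset] at this

lemma nbr_surj (G : SimpleGraph V) {d : ℕ} (hreg : G.IsRegularOfDegree d) {u w : V}
    (h : G.Adj u w) : ∃ i, nbr G hreg u i = w := by
  refine ⟨((G.neighborFinset u).equivFinOfCardEq (hreg u))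
    ⟨w, (SimpleGraph.mem_neighborFinset G u w).2 h⟩, ?_⟩
  unfold nbr
  rw [Equiv.symm_apply_apply]

/-! ### The decoding run -/

/-- The vertices pushed on the stack for child set `a` of vertex `u`. -/
def push (G : SimpleGraph V) {d : ℕ} (hreg : G.IsRegularOfDegree d) (u : V)
    (a : Finset (Fin d)) : List V :=
  (a.sort (· ≤ ·)).map (nbr G hreg u)

/-- The stack-based decoding of a code into the preorder list of visited
vertices. -/
def run (G : SimpleGraph V) {d : ℕ} (hreg : G.IsRegularOfDegree d) :
    List (Finset (Fin d)) → List V → List V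
  | [], _ => []
  | _ :: _, [] => []
  | a :: c, u :: st => u :: run G hreg c (push G hreg u a ++ st)

@[simp] lemma run_nil (G : SimpleGraph V) {d : ℕ} (hreg : G.IsRegularOfDegree d)
    (st : List V) : run G hreg [] st = [] := by
  unfold run
  rfl

@[simp] lemma run_cons (G : SimpleGraph V) {d : ℕ} (hreg : G.IsRegularOfDegree d)
    (a : Finset (Fin d)) (c : List (Finset (Fin d))) (u : V) (st : List V) :
    run G hreg (a :: c) (u :: st) = u :: run G hreg c (push G hreg u a ++ st) := by
  conv_lhs => rw [run]

/-! ### Connectivity inside a finset -/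

/-- Connectivity within a vertex set `S`: there is a walk whose support stays
in `S`. -/
def ConnTo (G : SimpleGraph V) (S : Finset V) (u x : V) : Prop :=
  ∃ p : G.Walk u x, ∀ y ∈ p.support, y ∈ S

lemma connTo_refl (G : SimpleGraph V) {S : Finset V} {u : V} (hu : u ∈ S) :
    ConnTo G S u u :=
  ⟨SimpleGraph.Walk.nil, by simpa using hu⟩

lemma connTo_symm (G : SimpleGraph V) {S : Finset V} {u x : V}
    (h : ConnTo G S u x) : ConnTo G S x u := by
  obtain ⟨p, hp⟩ := h
  exact ⟨p.reverse, by
    intro y hy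
    rw [SimpleGraph.Walk.support_reverse, List.mem_reverse] at hy
    exact hp y hy⟩

lemma connTo_trans (G : SimpleGraph V) {S : Finset V} {u x z : V}
    (h1 : ConnTo G S u x) (h2 : ConnTo G S x z) : ConnTo G S u z := by
  obtain ⟨p, hp⟩ := h1
  obtain ⟨q, hq⟩ := h2
  refine ⟨p.append q, ?_⟩
  intro y hy
  rw [SimpleGraph.Walk.support_append, List.mem_append] at hy
  rcases hy with hy | hy
  · exact hp y hy
  · exact hq y (List.mem_of_mem_tail hy)

lemma connTo_mem_right (G : SimpleGraph V) {S : Finset V} {u x : V}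
    (h : ConnTo G S u x) : x ∈ S := by
  obtain ⟨p, hp⟩ := h
  exact hp x p.end_mem_support

/-- The connected component of `w` inside `S`. -/
def comp (G : SimpleGraph V) (S : Finset V) (w : V) : Finset V :=
  S.filter (fun x => ConnTo G S w x)

lemma comp_subset (G : SimpleGraph V) (S : Finset V) (w : V) : comp G S w ⊆ S :=
  Finset.filter_subset _ _

lemma mem_comp {G : SimpleGraph V} {S : Finset V} {w x : V} :
    x ∈ comp G S w ↔ x ∈ S ∧ ConnTo G S w x := Finset.mem_filter

lemma self_mem_comp {G : SimpleGraph V} {S : Finset V} {w : V} (hw : w ∈ S) :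
    w ∈ comp G S w := mem_comp.2 ⟨hw, connTo_refl G hw⟩

lemma comp_eq_of_mem {G : SimpleGraph V} {S : Finset V} {w x : V}
    (h : x ∈ comp G S w) : comp G S x = comp G S w := by
  obtain ⟨hxS, hwx⟩ := mem_comp.1 h
  ext y
  simp only [mem_comp]
  constructor
  · rintro ⟨hyS, hxy⟩
    exact ⟨hyS, connTo_trans G hwx hxy⟩
  · rintro ⟨hyS, hwy⟩
    exact ⟨hyS, connTo_trans G (connTo_symm G hwx) hwy⟩

lemma comp_connTo {G : SimpleGraph V} {S : Finset V} {w x : V}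
    (h : x ∈ comp G S w) : ConnTo G (comp G S w) w x := by
  obtain ⟨hxS, p, hp⟩ := mem_comp.1 h
  refine ⟨p, fun y hy => ?_⟩
  exact mem_comp.2 ⟨hp y hy, p.takeUntil y hy, fun z hz =>
    hp z (SimpleGraph.Walk.support_takeUntil_subset p hy hz)⟩


/-! ### Łukasiewicz lemmas for flatten -/

lemma sumCards_cons {d : ℕ} (a : Finset (Fin d)) (c : List (Finset (Fin d))) :
    sumCards (a :: c) = a.card + sumCards c := by simp [sumCards]

lemma sumCards_flatten {d : ℕ} (cs : List (List (Finset (Fin d)))) :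
    sumCards cs.flatten = (cs.map sumCards).sum := by
  unfold sumCards
  rw [List.map_flatten, List.sum_flatten, List.map_map]
  rfl

lemma prefix_append_cases {α : Type*} {p l₁ l₂ : List α} (h : p <+: l₁ ++ l₂) :
    p <+: l₁ ∨ ∃ q, q <+: l₂ ∧ p = l₁ ++ q := by
  rcases le_or_gt p.length l₁.length with hle | hlt
  · exact Or.inl ((List.isPrefix_append_of_length hle).1 h)
  · right
    have hp := List.prefix_iff_eq_take.mp h
    have hp2 : p = l₁ ++ l₂.take (p.length - l₁.length) := by
      conv_lhs => rw [hp]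
      rw [List.take_append, List.take_of_length_le hlt.le]
    exact ⟨l₂.take (p.length - l₁.length), List.take_prefix _ _, hp2⟩

lemma Lk_flatten_prefix {d : ℕ} :
    ∀ (cs : List (List (Finset (Fin d)))), (∀ cc ∈ cs, Lk cc) →
      ∀ p, p <+: cs.flatten →
        (p.length ≤ sumCards p + cs.length ∧
          (p.length < cs.flatten.length → p.length + 1 ≤ sumCards p + cs.length)) := by
  intro cs
  induction cs with
  | nil =>
    intro _ p hp
    have : p = [] := List.prefix_nil.mp (by simpa using hp)
    subst this
    simp
  | cons c cs ih =>
    intro hall p hp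
    rw [List.flatten_cons] at hp
    have hc : Lk c := hall c List.mem_cons_self
    rcases prefix_append_cases hp with hp1 | ⟨q, hq, rfl⟩
    · rcases eq_or_ne p c with rfl | hne
      · have h1 := hc.1
        refine ⟨by simp only [List.length_cons]; omega, fun hlt => ?_⟩
        have h2 : 0 < cs.flatten.length := by
          simp only [List.flatten_cons, List.length_append] at hlt
          omega
        have h3 : cs ≠ [] := by
          rintro rfl
          simp at h2
        have h4 : 1 ≤ cs.length := List.length_pos_iff.mpr h3
        simp only [List.length_cons]
        omega
      · have hlt : p.length < c.length := by
          have hle := hp1.length_le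
          rcases Nat.lt_or_ge p.length c.length with h | h
          · exact h
          · exact absurd (hp1.eq_of_length (le_antisymm hle h)) hne
        have h5 := hc.2 p hp1 hlt
        exact ⟨by omega, fun _ => by simp only [List.length_cons]; omega⟩
    · have hqq := ih (fun cc h => hall cc (List.mem_cons_of_mem _ h)) q hq
      have hsc : sumCards (c ++ q) = sumCards c + sumCards q := sumCards_append c q
      have hc1 := hc.1
      refine ⟨?_, ?_⟩
      · have := hqq.1
        simp only [List.length_append, List.length_cons]
        omega
      · intro hlt
        simp only [List.flatten_cons, List.length_append, List.length_cons] at hlt ⊢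
        have h6 : q.length < cs.flatten.length := by omega
        have := hqq.2 h6
        omega

lemma sum_of_Lk {d : ℕ} :
    ∀ (cs : List (List (Finset (Fin d)))), (∀ cc ∈ cs, Lk cc) →
      (cs.map sumCards).sum + cs.length = (cs.map List.length).sum := by
  intro cs
  induction cs with
  | nil => simp
  | cons c cs ih =>
    intro hall
    have hc := (hall c List.mem_cons_self).1
    have := ih (fun cc h => hall cc (List.mem_cons_of_mem _ h))
    simp only [List.map_cons, List.sum_cons, List.length_cons]
    omega

lemma Lk_node {d : ℕ} (R : Finset (Fin d)) (cs : List (List (Finset (Fin d))))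
    (hall : ∀ cc ∈ cs, Lk cc) (hlen : R.card = cs.length) :
    Lk (R :: cs.flatten) := by
  have htot := sum_of_Lk cs hall
  have hflen : cs.flatten.length = (cs.map List.length).sum := List.length_flatten
  constructor
  · rw [sumCards_cons, sumCards_flatten]
    simp only [List.length_cons]
    omega
  · intro p hp hplen
    rcases p with _ | ⟨a, p'⟩
    · simp [sumCards]
    · obtain ⟨rfl, hp'⟩ := List.cons_prefix_cons.mp hp
      simp only [List.length_cons] at hplen
      have hlt : p'.length < cs.flatten.length := by omega
      have hJ := (Lk_flatten_prefix cs hall p' hp').2 hlt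
      rw [sumCards_cons]
      simp only [List.length_cons]
      omega

lemma run_flatten (G : SimpleGraph V) {d : ℕ} (hreg : G.IsRegularOfDegree d) :
    ∀ (ps : List (Fin d)) (cF : Fin d → List (Finset (Fin d))) (LF : Fin d → List V)
      (wF : Fin d → V),
      (∀ i ∈ ps, ∀ rest st,
        run G hreg (cF i ++ rest) (wF i :: st) = LF i ++ run G hreg rest st) →
      ∀ rest st, run G hreg ((ps.map cF).flatten ++ rest) (ps.map wF ++ st)
        = (ps.map LF).flatten ++ run G hreg rest st := by
  intro ps cF LF wF
  induction ps with
  | nil =>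
    intro _ rest st
    simp
  | cons i ps ih =>
    intro H rest st
    simp only [List.map_cons, List.flatten_cons, List.append_assoc, List.cons_append]
    rw [H i List.mem_cons_self ((ps.map cF).flatten ++ rest) (ps.map wF ++ st)]
    rw [ih (fun j hj => H j (List.mem_cons_of_mem _ hj)) rest st]

lemma sort_map_sum {α : Type*} [LinearOrder α] [DecidableEq α] (s : Finset α) (f : α → ℕ) :
    ((s.sort (· ≤ ·)).map f).sum = s.sum f := by
  have h1 : ((s.sort (· ≤ ·)) : Multiset α) = s.val := s.sort_eq _
  calc ((s.sort (· ≤ ·)).map f).sum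
      = Multiset.sum ↑((s.sort (· ≤ ·)).map f) := by rw [Multiset.sum_coe]
    _ = Multiset.sum (Multiset.map f ↑(s.sort (· ≤ ·))) := by rw [Multiset.map_coe]
    _ = Multiset.sum (Multiset.map f s.val) := by rw [h1]
    _ = s.sum f := rfl

/-! ### Existence of codes for connected sets -/

lemma exists_code (G : SimpleGraph V) {d : ℕ} (hreg : G.IsRegularOfDegree d) :
    ∀ (n : ℕ) (S : Finset V) (u : V), S.card = n → u ∈ S →
      (∀ x ∈ S, ConnTo G S u x) →
      ∃ (c : List (Finset (Fin d))) (L : List V),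
        c.length = n ∧ Lk c ∧ L.Nodup ∧ L.toFinset = S ∧
        ∀ rest st, run G hreg (c ++ rest) (u :: st) = L ++ run G hreg rest st := by
  intro n
  induction n using Nat.strong_induction_on with
  | _ n IH =>
  intro S u hcard hu hconn
  classical
  set S' := S.erase u with hS'
  have hn : 1 ≤ n := by
    rw [← hcard]
    exact Finset.card_pos.2 ⟨u, hu⟩
  have hS'card : S'.card = n - 1 := by
    rw [hS', Finset.card_erase_of_mem hu, hcard]
  -- every x in S' lies in the component of some neighbour of u
  have hcover : ∀ x ∈ S', ∃ w, G.Adj u w ∧ w ∈ S' ∧ x ∈ comp G S' w := by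
    intro x hx
    obtain ⟨hxu, hxS⟩ := Finset.mem_erase.1 hx
    obtain ⟨p0, hp0⟩ := hconn x hxS
    obtain ⟨q, hq, hqp⟩ : ∃ q : G.Walk u x, q.IsPath ∧ ∀ y ∈ q.support, y ∈ S :=
      ⟨p0.toPath, p0.toPath.2, fun y hy =>
        hp0 y (SimpleGraph.Walk.support_toPath_subset p0 hy)⟩
    obtain ⟨w, hadj, p', rfl⟩ :=
      SimpleGraph.Walk.exists_eq_cons_of_ne (Ne.symm hxu) q
    rw [SimpleGraph.Walk.cons_isPath_iff] at hq
    have hp'S : ∀ y ∈ p'.support, y ∈ S' := by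
      intro y hy
      refine Finset.mem_erase.2 ⟨?_, hqp y (by
        rw [SimpleGraph.Walk.support_cons]
        exact List.mem_cons_of_mem _ hy)⟩
      rintro rfl
      exact hq.2 hy
    have hwS' : w ∈ S' := hp'S w p'.start_mem_support
    exact ⟨w, hadj, hwS', mem_comp.2 ⟨hx, ⟨p', hp'S⟩⟩⟩
  -- the finset of minimal ports of the components of S'
  set R : Finset (Fin d) := Finset.univ.filter (fun i =>
    nbr G hreg u i ∈ S' ∧
      ∀ j, j < i → nbr G hreg u j ∉ comp G S' (nbr G hreg u i)) with hR
  have hRmem : ∀ i ∈ R, nbr G hreg u i ∈ comp G S' (nbr G hreg u i) := by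
    intro i hi
    exact self_mem_comp ((Finset.mem_filter.1 hi).2.1)
  have hR1 : ∀ x ∈ S', ∃ i ∈ R, x ∈ comp G S' (nbr G hreg u i) := by
    intro x hx
    obtain ⟨w, hadj, hwS', hxw⟩ := hcover x hx
    obtain ⟨i₀, hi₀⟩ := nbr_surj G hreg hadj
    set Q := Finset.univ.filter (fun j : Fin d => nbr G hreg u j ∈ comp G S' w) with hQ
    have hQne : Q.Nonempty := ⟨i₀, by
      rw [hQ]
      simp only [Finset.mem_filter, Finset.mem_univ, true_and, hi₀]
      exact self_mem_comp hwS'⟩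
    set i := Q.min' hQne with hi
    have hiQ : i ∈ Q := Q.min'_mem hQne
    have hiw : nbr G hreg u i ∈ comp G S' w := by
      rw [hQ] at hiQ
      exact (Finset.mem_filter.1 hiQ).2
    have hcompeq : comp G S' (nbr G hreg u i) = comp G S' w := comp_eq_of_mem hiw
    have hiR : i ∈ R := by
      rw [hR]
      simp only [Finset.mem_filter, Finset.mem_univ, true_and]
      refine ⟨comp_subset G S' w hiw, fun j hj hjmem => ?_⟩
      rw [hcompeq] at hjmem
      have hjQ : j ∈ Q := by
        rw [hQ]
        simp only [Finset.mem_filter, Finset.mem_univ, true_and]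
        exact hjmem
      exact absurd (Q.min'_le j hjQ) (not_le.2 hj)
    refine ⟨i, hiR, ?_⟩
    rw [hcompeq]
    exact hxw
  have hR3 : ∀ i ∈ R, ∀ i' ∈ R, i ≠ i' → ∀ x, x ∈ comp G S' (nbr G hreg u i) →
      x ∈ comp G S' (nbr G hreg u i') → False := by
    intro i hi i' hi' hne x hxi hxi'
    have heq : comp G S' (nbr G hreg u i) = comp G S' (nbr G hreg u i') := by
      rw [← comp_eq_of_mem hxi, ← comp_eq_of_mem hxi']
    rcases hne.lt_or_gt with hlt | hlt
    · exact ((Finset.mem_filter.1 hi').2.2 i hlt) (heq ▸ hRmem i hi)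
    · exact ((Finset.mem_filter.1 hi).2.2 i' hlt) (heq ▸ hRmem i' hi')
  -- choose codes for the components
  have HC : ∀ i : Fin d, ∃ (c : List (Finset (Fin d))) (L : List V), i ∈ R →
      (c.length = (comp G S' (nbr G hreg u i)).card ∧ Lk c ∧ L.Nodup ∧
        L.toFinset = comp G S' (nbr G hreg u i) ∧
        ∀ rest st, run G hreg (c ++ rest) (nbr G hreg u i :: st) =
          L ++ run G hreg rest st) := by
    intro i
    by_cases hi : i ∈ R
    · have hCsub : comp G S' (nbr G hreg u i) ⊆ S' := comp_subset _ _ _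
      have hclt : (comp G S' (nbr G hreg u i)).card < n := by
        have := Finset.card_le_card hCsub
        omega
      obtain ⟨c, L, h⟩ := IH _ hclt _ _ rfl (hRmem i hi) (fun x hx => comp_connTo hx)
      exact ⟨c, L, fun _ => h⟩
    · exact ⟨[], [], fun h => absurd h hi⟩
  choose cF LF hCL using HC
  set ps := R.sort (· ≤ ·) with hps
  have hpsR : ∀ i, i ∈ ps ↔ i ∈ R := fun i => Finset.mem_sort _
  have hdisjF : ∀ i ∈ R, ∀ j ∈ R, i ≠ j →
      Disjoint (comp G S' (nbr G hreg u i)) (comp G S' (nbr G hreg u j)) := by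
    intro i hi j hj hne
    rw [Finset.disjoint_left]
    intro x hxi hxj
    exact hR3 i hi j hj hne x hxi hxj
  have hcardsum : ∑ i ∈ R, (comp G S' (nbr G hreg u i)).card = n - 1 := by
    have hbiU : R.biUnion (fun i => comp G S' (nbr G hreg u i)) = S' := by
      ext x
      simp only [Finset.mem_biUnion]
      constructor
      · rintro ⟨i, hi, hx⟩
        exact comp_subset _ _ _ hx
      · intro hx
        exact hR1 x hx
    rw [← Finset.card_biUnion hdisjF, hbiU, hS'card]
  refine ⟨R :: (ps.map cF).flatten, u :: (ps.map LF).flatten, ?_, ?_, ?_, ?_, ?_⟩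
  · -- length
    have h1 : (ps.map cF).flatten.length = ((ps.map cF).map List.length).sum :=
      List.length_flatten
    have h2 : ((ps.map cF).map List.length).sum = (ps.map (fun i => (cF i).length)).sum := by
      rw [List.map_map]
      rfl
    have h3 : (ps.map (fun i => (cF i).length)).sum = ∑ i ∈ R, (cF i).length :=
      sort_map_sum R _
    have h4 : ∑ i ∈ R, (cF i).length = ∑ i ∈ R, (comp G S' (nbr G hreg u i)).card :=
      Finset.sum_congr rfl (fun i hi => (hCL i hi).1)
    simp only [List.length_cons]
    omega
  · -- Lk
    apply Lk_node
    · intro cc hcc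
      rw [List.mem_map] at hcc
      obtain ⟨i, hi, rfl⟩ := hcc
      exact (hCL i ((hpsR i).1 hi)).2.1
    · rw [List.length_map, hps, Finset.length_sort]
  · -- Nodup
    rw [List.nodup_cons]
    constructor
    · intro hmem
      rw [List.mem_flatten] at hmem
      obtain ⟨l, hl, hul⟩ := hmem
      rw [List.mem_map] at hl
      obtain ⟨i, hi, rfl⟩ := hl
      have : u ∈ (LF i).toFinset := List.mem_toFinset.2 hul
      rw [(hCL i ((hpsR i).1 hi)).2.2.2.1] at this
      have := comp_subset _ _ _ this
      rw [hS'] at this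
      exact (Finset.mem_erase.1 this).1 rfl
    · rw [List.nodup_flatten]
      constructor
      · intro l hl
        rw [List.mem_map] at hl
        obtain ⟨i, hi, rfl⟩ := hl
        exact (hCL i ((hpsR i).1 hi)).2.2.1
      · rw [List.pairwise_map]
        have hnodup : ps.Nodup := Finset.sort_nodup _ _
        refine hnodup.pairwise_of_forall_ne (fun i hi j hj hne => ?_)
        intro x hxi hxj
        have h1 : x ∈ (LF i).toFinset := List.mem_toFinset.2 hxi
        have h2 : x ∈ (LF j).toFinset := List.mem_toFinset.2 hxj
        rw [(hCL i ((hpsR i).1 hi)).2.2.2.1] at h1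
        rw [(hCL j ((hpsR j).1 hj)).2.2.2.1] at h2
        exact hR3 i ((hpsR i).1 hi) j ((hpsR j).1 hj) hne x h1 h2
  · -- toFinset
    rw [List.toFinset_cons]
    have hflat : (ps.map LF).flatten.toFinset = S' := by
      ext x
      rw [List.mem_toFinset, List.mem_flatten]
      constructor
      · rintro ⟨l, hl, hxl⟩
        rw [List.mem_map] at hl
        obtain ⟨i, hi, rfl⟩ := hl
        have : x ∈ (LF i).toFinset := List.mem_toFinset.2 hxl
        rw [(hCL i ((hpsR i).1 hi)).2.2.2.1] at this
        exact comp_subset _ _ _ this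
      · intro hx
        obtain ⟨i, hi, hxi⟩ := hR1 x hx
        refine ⟨LF i, List.mem_map.2 ⟨i, (hpsR i).2 hi, rfl⟩, ?_⟩
        rw [← List.mem_toFinset, (hCL i hi).2.2.2.1]
        exact hxi
    rw [hflat, hS', Finset.insert_erase hu]
  · -- run
    intro rest st
    rw [List.cons_append, run_cons]
    have hpush : push G hreg u R = ps.map (nbr G hreg u) := rfl
    rw [hpush]
    rw [run_flatten G hreg ps cF LF (nbr G hreg u)
      (fun i hi => (hCL i ((hpsR i).1 hi)).2.2.2.2) rest st]
    rw [List.cons_append]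

/-! ### From induced connectivity to `ConnTo` -/

lemma connTo_of_induce {G : SimpleGraph V} {S : Finset V} {v : V}
    (h : (G.induce (S : Set V)).Connected) (hv : v ∈ S) :
    ∀ x ∈ S, ConnTo G S v x := by
  intro x hx
  obtain ⟨p⟩ := h.preconnected ⟨v, hv⟩ ⟨x, hx⟩
  refine ⟨p.map (SimpleGraph.Embedding.induce (S : Set V)).toHom, ?_⟩
  intro y hy
  replace hy : y ∈ p.support.map (SimpleGraph.Embedding.induce (G := G) (S : Set V)).toHom := by
    rw [← SimpleGraph.Walk.support_map]; exact hy
  rw [List.mem_map] at hy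
  obtain ⟨⟨z, hz⟩, -, rfl⟩ := hy
  exact hz

/-- The main counting bound, in `ℕ`. -/
lemma main_count (G : SimpleGraph V) {d : ℕ} (hreg : G.IsRegularOfDegree d)
    (v : V) (s : ℕ) :
    ((Finset.univ : Finset (Finset V)).filter fun S : Finset V =>
        v ∈ S ∧ S.card = s ∧ (G.induce (S : Set V)).Connected).card * s ≤
      (s * d).choose (s - 1) := by
  classical
  set fam : Finset (Finset V) := (Finset.univ : Finset (Finset V)).filter
    (fun S : Finset V => v ∈ S ∧ S.card = s ∧ (G.induce (S : Set V)).Connected) with hfam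
  have HS : ∀ T : {T : Finset V // T ∈ fam}, ∃ f : Fin s → Finset (Fin d),
      OkCode s d f ∧ (run G hreg (List.ofFn f) [v]).toFinset = T.1 := by
    rintro ⟨T, hT⟩
    rw [hfam, Finset.mem_filter] at hT
    obtain ⟨-, hvT, hScard, hconn⟩ := hT
    obtain ⟨c, L, hlen, hLk, hnodup, htf, hrun⟩ :=
      exists_code G hreg s T v hScard hvT (connTo_of_induce hconn hvT)
    refine ⟨fun i => c.get (Fin.cast hlen.symm i), ?_, ?_⟩
    · unfold OkCode
      rw [ofFn_get_cast c hlen]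
      exact hLk
    · rw [ofFn_get_cast c hlen]
      have h2 := hrun [] []
      rw [List.append_nil] at h2
      rw [h2]
      simp [htf]
  choose F hF using HS
  have hinjF : Function.Injective
      (fun T : {T : Finset V // T ∈ fam} =>
        (⟨F T, (hF T).1⟩ : {f : Fin s → Finset (Fin d) // OkCode s d f})) := by
    intro a b hab
    apply Subtype.ext
    rw [← (hF a).2, ← (hF b).2]
    simp only [Subtype.mk.injEq] at hab
    rw [hab]
  have h1 : fam.card ≤ Fintype.card {f : Fin s → Finset (Fin d) // OkCode s d f} := by
    have := Fintype.card_le_of_injective _ hinjF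
    rwa [Fintype.card_coe] at this
  calc fam.card * s
      ≤ Fintype.card {f : Fin s → Finset (Fin d) // OkCode s d f} * s :=
        Nat.mul_le_mul_right _ h1
    _ ≤ Fintype.card {f : Fin s → Finset (Fin d) // TotCode s d f} := card_ok_mul s d
    _ ≤ (s * d).choose (s - 1) := card_tot_le s d

end CCSAux

/-- In a `d`-regular graph, the number of vertex subsets `S` of size `s` that
contain a fixed vertex `v` and induce a connected subgraph is at most
`(e·d)^(s-1)`. -/
theorem count_connected_subsets (G : SimpleGraph V) (d : ℕ)
    (hreg : G.IsRegularOfDegree d) (v : V) (s : ℕ) (hs : 1 ≤ s) :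
    (((univ : Finset (Finset V)).filter fun S : Finset V =>
        v ∈ S ∧ S.card = s ∧ (G.induce (S : Set V)).Connected).card : ℝ) ≤
      (Real.exp 1 * (d : ℝ)) ^ (s - 1) := by
  classical
  have hkey := CCSAux.main_count G hreg v s
  have hC := CCSAux.choose_le_main s d hs
  have hs0 : (0 : ℝ) < (s : ℝ) := by
    exact_mod_cast Nat.lt_of_lt_of_le Nat.zero_lt_one hs
  have hcast : (((Finset.univ : Finset (Finset V)).filter fun S : Finset V =>
      v ∈ S ∧ S.card = s ∧ (G.induce (S : Set V)).Connected).card : ℝ) * (s : ℝ) ≤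
      (((s * d).choose (s - 1) : ℕ) : ℝ) := by
    exact_mod_cast hkey
  have h2 := hcast.trans hC
  rw [mul_comm ((s : ℝ)) _] at h2
  exact le_of_mul_le_mul_right h2 hs0

end
end

section
/- Let H be a finite connected graph on n vertices with m edges, let S be a nonempty proper subset of its vertices, and let u ∉ S. Let Γ be the multigraph obtained from H by contracting S to a single vertex γ, retaining all edges (edges inside S become loops at γ). Suppose T ≥ 1 is such that for all t ≥ T the lazy walk on H satisfies |P_x^t(y) − d_H(y)/(2m)| ≤ n^{−3} for all vertices x,y, and the lazy walk on Γ satisfies the analogous bound with stationary probabilities d_Γ(y)/(2m). Then there is an absolute constant C such that for all t ≥ T, the probability that the lazy walk on H started at u avoids every vertex of S at all steps s with T ≤ s ≤ t differs from the probability that the lazy walk on Γ started at u avoids γ at all steps s with T ≤ s ≤ t by at most C/n². -/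
open Finset Filter

noncomputable section
open scoped Classical

variable {V : Type*} [Fintype V] [DecidableEq V]

/-- The degree of `x` in `H`. -/
def degH (H : SimpleGraph V) (x : V) : ℕ :=
  ((univ : Finset V).filter fun y => H.Adj x y).card

/-- Transition matrix of the lazy random walk on a (not necessarily regular)
graph `H`: stay put with probability 1/2, otherwise traverse each incident
edge with equal probability. -/
def lazyH (H : SimpleGraph V) : Matrix V V ℝ :=
  Matrix.of fun x y =>
    (if x = y then (2 : ℝ)⁻¹ else 0) +
      (if H.Adj x y then ((2 : ℝ) * (degH H x : ℝ))⁻¹ else 0)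

/-- Transition matrix of the lazy random walk on the multigraph `Γ` obtained
from `H` by contracting `S` to a single vertex `γ` (represented by `Sum.inr ()`),
retaining all edges; edges inside `S` become loops at `γ`. -/
def contractedLazyH (H : SimpleGraph V) (S : Finset V) :
    Matrix ({x : V // x ∉ S} ⊕ Unit) ({x : V // x ∉ S} ⊕ Unit) ℝ :=
  Matrix.of fun a b =>
    match a, b with
    | Sum.inl x, Sum.inl y => lazyH H x.1 y.1
    | Sum.inl x, Sum.inr _ =>
        ((S.filter fun z => H.Adj x.1 z).card : ℝ) / (2 * (degH H x.1 : ℝ))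
    | Sum.inr _, Sum.inl y =>
        ((S.filter fun z => H.Adj z y.1).card : ℝ) / (2 * ∑ w ∈ S, (degH H w : ℝ))
    | Sum.inr _, Sum.inr _ =>
        (2 : ℝ)⁻¹ + (edgesInside H S : ℝ) / (∑ w ∈ S, (degH H w : ℝ))

/-- The degree in `Γ` (loops counted twice): `d_Γ(γ) = Σ_{v ∈ S} d_H(v)`, and
vertices outside `S` keep their `H`-degree. -/
def degGamma (H : SimpleGraph V) (S : Finset V) : ({x : V // x ∉ S} ⊕ Unit) → ℕ
  | Sum.inl x => degH H x.1
  | Sum.inr _ => ∑ w ∈ S, degH H w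

lemma walkProb_congr (M : Matrix V V ℝ) (u : V) (t : ℕ) {E E' : (Fin (t+1) → V) → Prop}
    (h : ∀ p, E p ↔ E' p) : walkProb M u t E = walkProb M u t E' :=
  Finset.sum_congr rfl fun p _ => if_congr (and_congr_right fun _ => h p) rfl rfl

lemma walkProb_nonneg (M : Matrix V V ℝ) (hM : ∀ x y, 0 ≤ M x y) (u : V) (t : ℕ)
    (E : (Fin (t+1) → V) → Prop) : 0 ≤ walkProb M u t E :=
  Finset.sum_nonneg fun p _ => by
    split
    · exact Finset.prod_nonneg fun i _ => hM _ _
    · exact le_refl 0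

lemma walkProb_mono (M : Matrix V V ℝ) (hM : ∀ x y, 0 ≤ M x y) (u : V) (t : ℕ)
    {E E' : (Fin (t+1) → V) → Prop} (h : ∀ p, E p → E' p) :
    walkProb M u t E ≤ walkProb M u t E' := by
  refine Finset.sum_le_sum fun p _ => ?_
  by_cases hp : p 0 = u ∧ E p
  · rw [if_pos hp, if_pos ⟨hp.1, h p hp.2⟩]
  · rw [if_neg hp]
    split
    · exact Finset.prod_nonneg fun i _ => hM _ _
    · exact le_refl 0

lemma walkProb_cons (M : Matrix V V ℝ) (u : V) (t : ℕ)
    (E : (Fin (t+1) → V) → Prop) (E' : (Fin (t+2) → V) → Prop)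
    (hE : ∀ (x : V) (q : Fin (t+1) → V), E' (Fin.cons x q) ↔ E q) :
    walkProb M u (t+1) E' = ∑ y, M u y * walkProb M y t E := by
  unfold walkProb
  rw [← (Fin.consEquiv (fun _ : Fin (t+2) => V)).sum_comp]
  rw [Fintype.sum_prod_type]
  have key : ∀ (x : V) (q : Fin (t+1) → V),
      (if (Fin.consEquiv (fun _ : Fin (t+2) => V)) (x, q) 0 = u ∧
          E' ((Fin.consEquiv (fun _ : Fin (t+2) => V)) (x, q)) then
        ∏ i : Fin (t+1), M (((Fin.consEquiv (fun _ : Fin (t+2) => V)) (x, q)) i.castSucc)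
          (((Fin.consEquiv (fun _ : Fin (t+2) => V)) (x, q)) i.succ) else 0)
      = if x = u ∧ E q then M x (q 0) * ∏ i : Fin t, M (q i.castSucc) (q i.succ) else 0 := by
    intro x q
    have hcons : (Fin.consEquiv (fun _ : Fin (t+2) => V)) (x, q) = Fin.cons x q := rfl
    rw [hcons]
    have hprod : ∏ i : Fin (t+1), M ((Fin.cons x q : Fin (t+2) → V) i.castSucc)
        ((Fin.cons x q : Fin (t+2) → V) i.succ)
        = M x (q 0) * ∏ i : Fin t, M (q i.castSucc) (q i.succ) := by
      rw [Fin.prod_univ_succ]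
      congr 1
    rw [hprod, Fin.cons_zero, hE]
  simp_rw [key]
  have collapse : ∀ q : Fin (t+1) → V,
      (∑ x, if x = u ∧ E q then M x (q 0) * ∏ i : Fin t, M (q i.castSucc) (q i.succ) else 0)
      = if E q then M u (q 0) * ∏ i : Fin t, M (q i.castSucc) (q i.succ) else 0 := by
    intro q
    by_cases hq : E q
    · simp [hq]
    · simp [hq]
  rw [Finset.sum_comm]
  simp_rw [collapse, Finset.mul_sum, mul_ite, mul_zero]
  rw [Finset.sum_comm]
  refine Finset.sum_congr rfl fun q _ => ?_
  by_cases hq : E q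
  · simp [hq, Finset.sum_ite_eq]
  · simp [hq]

lemma walkProb_decomp (M : Matrix V V ℝ) (A : V → Prop) :
    ∀ (T t : ℕ), T ≤ t → ∀ u : V,
      walkProb M u t (fun p => ∀ s : Fin (t+1), T ≤ (s : ℕ) → A (p s))
      = ∑ y, (M ^ T) u y *
          walkProb M y (t - T) (fun p => ∀ s : Fin (t - T + 1), A (p s)) := by
  intro T
  induction T with
  | zero =>
    intro t _ u
    rw [walkProb_congr M u t (E' := fun p => ∀ s : Fin (t+1), A (p s))
      (fun p => by constructor <;> intro h s <;> [exact h s (Nat.zero_le _); exact fun _ => h s])]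
    simp [Matrix.one_apply]
  | succ T ih =>
    intro t ht u
    obtain ⟨t', rfl⟩ : ∃ t', t = t' + 1 := ⟨t - 1, by omega⟩
    have ht' : T ≤ t' := by omega
    rw [walkProb_cons M u t' (fun q => ∀ s : Fin (t'+1), T ≤ (s : ℕ) → A (q s))
      (fun p => ∀ s : Fin (t'+2), T + 1 ≤ (s : ℕ) → A (p s)) ?_]
    · simp_rw [ih t' ht' _]
      have hsub : t' + 1 - (T + 1) = t' - T := by omega
      rw [hsub]
      simp_rw [pow_succ', Matrix.mul_apply, Finset.sum_mul, Finset.mul_sum, mul_assoc]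
      rw [Finset.sum_comm]
    · intro x q
      constructor
      · intro h s hs
        have := h s.succ (by simpa using Nat.succ_le_succ hs)
        simpa using this
      · intro h s
        refine Fin.cases ?_ ?_ s
        · intro h0; simp at h0
        · intro j hj
          simp only [Fin.cons_succ]
          exact h j (by simpa using hj)

lemma walkProb_zero_t (M : Matrix V V ℝ) (u : V) (E : (Fin 1 → V) → Prop) :
    walkProb M u 0 E = if E (fun _ => u) then 1 else 0 := by
  unfold walkProb
  rw [← (Equiv.funUnique (Fin 1) V).symm.sum_comp]
  have : ∀ v : V, (Equiv.funUnique (Fin 1) V).symm v = fun _ => v := fun _ => rfl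
  simp_rw [this]
  simp only [Finset.univ_eq_empty, Finset.prod_empty, ite_and]
  rw [Finset.sum_ite_eq' univ u (fun v => if E (fun _ => v) then (1:ℝ) else 0)]
  simp

lemma walkProb_true (M : Matrix V V ℝ) (hrow : ∀ x, ∑ y, M x y = 1) :
    ∀ (t : ℕ) (u : V), walkProb M u t (fun _ => True) = 1 := by
  intro t
  induction t with
  | zero => intro u; rw [walkProb_zero_t]; simp
  | succ t ih =>
    intro u
    rw [walkProb_cons M u t (fun _ => True) (fun _ => True) (fun _ _ => Iff.rfl)]
    simp [ih, hrow]

lemma walkProb_start_false (M : Matrix V V ℝ) (u : V) (t : ℕ)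
    {E : (Fin (t+1) → V) → Prop} (h : ∀ p, p 0 = u → ¬ E p) :
    walkProb M u t E = 0 := by
  refine Finset.sum_eq_zero fun p _ => ?_
  rw [if_neg (fun hp => h p hp.1 hp.2)]

lemma lazyH_nonneg (H : SimpleGraph V) (x y : V) : 0 ≤ lazyH H x y := by
  unfold lazyH
  simp only [Matrix.of_apply]
  have h1 : (0:ℝ) ≤ if x = y then (2:ℝ)⁻¹ else 0 := by positivity
  have h2 : (0:ℝ) ≤ if H.Adj x y then ((2 : ℝ) * (degH H x : ℝ))⁻¹ else 0 := by positivity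
  linarith

lemma contractedLazyH_nonneg (H : SimpleGraph V) (S : Finset V) (a b : {x : V // x ∉ S} ⊕ Unit) :
    0 ≤ contractedLazyH H S a b := by
  unfold contractedLazyH
  rcases a with x | _ <;> rcases b with y | _ <;> simp only [Matrix.of_apply]
  · exact lazyH_nonneg H x.1 y.1
  · positivity
  · positivity
  · have : (0:ℝ) ≤ (edgesInside H S : ℝ) / (∑ w ∈ S, (degH H w : ℝ)) := by positivity
    positivity

lemma degH_pos (H : SimpleGraph V) (hc : H.Connected) {a b : V} (hab : a ≠ b) (x : V) :
    0 < degH H x := by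
  have hxy : ∃ y, y ≠ x := by
    by_cases hax : a = x
    · exact ⟨b, fun h => hab (hax.trans h.symm)⟩
    · exact ⟨a, hax⟩
  obtain ⟨y, hy⟩ := hxy
  obtain ⟨w⟩ := hc.preconnected x y
  have : ∃ z, H.Adj x z := by
    cases w with
    | nil => exact absurd rfl hy.symm
    | cons h _ => exact ⟨_, h⟩
  obtain ⟨z, hz⟩ := this
  unfold degH
  rw [Finset.card_pos]
  exact ⟨z, by simp [hz]⟩

lemma lazyH_rowsum (H : SimpleGraph V) (x : V) (hd : 0 < degH H x) :
    ∑ y, lazyH H x y = 1 := by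
  unfold lazyH
  simp only [Matrix.of_apply]
  rw [Finset.sum_add_distrib]
  have h1 : (∑ y : V, if x = y then (2:ℝ)⁻¹ else 0) = 2⁻¹ := by
    simp [Finset.sum_ite_eq]
  have h2 : (∑ y : V, if H.Adj x y then ((2 : ℝ) * (degH H x : ℝ))⁻¹ else 0)
      = (degH H x : ℝ) * ((2 : ℝ) * (degH H x : ℝ))⁻¹ := by
    rw [Finset.sum_ite, Finset.sum_const, Finset.sum_const_zero, add_zero, nsmul_eq_mul]
    rfl
  rw [h1, h2]
  have hdne : (degH H x : ℝ) ≠ 0 := Nat.cast_ne_zero.mpr hd.ne'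
  field_simp
  ring

lemma walkProb_contract (H : SimpleGraph V) (S : Finset V) (y : V) (hy : y ∉ S) (k : ℕ) :
    walkProb (lazyH H) y k (fun p => ∀ s : Fin (k+1), p s ∉ S)
      = walkProb (contractedLazyH H S) (Sum.inl ⟨y, hy⟩) k
          (fun p => ∀ s : Fin (k+1), p s ≠ Sum.inr ()) := by
  classical
  set Sub := {x : V // x ∉ S}
  have hval : Function.Injective (fun (q : Fin (k+1) → Sub) (i : Fin (k+1)) => (q i).1) := by
    intro q q' h
    funext i
    exact Subtype.ext (congrFun h i)
  have hinl : Function.Injective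
      (fun (q : Fin (k+1) → Sub) (i : Fin (k+1)) => (Sum.inl (q i) : Sub ⊕ Unit)) := by
    intro q q' h
    funext i
    exact Sum.inl_injective (congrFun h i)
  set emb1 : (Fin (k+1) → Sub) ↪ (Fin (k+1) → V) := ⟨_, hval⟩
  set emb2 : (Fin (k+1) → Sub) ↪ (Fin (k+1) → Sub ⊕ Unit) := ⟨_, hinl⟩
  unfold walkProb
  rw [← Finset.sum_subset (Finset.subset_univ ((univ : Finset (Fin (k+1) → Sub)).map emb1))
    (fun p _ hp => ?_), ← Finset.sum_subset
      (Finset.subset_univ ((univ : Finset (Fin (k+1) → Sub)).map emb2)) (fun p _ hp => ?_),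
    Finset.sum_map, Finset.sum_map]
  · refine Finset.sum_congr rfl fun q _ => ?_
    by_cases h0 : q 0 = ⟨y, hy⟩
    · rw [if_pos, if_pos]
      · exact Finset.prod_congr rfl fun i _ => rfl
      · exact ⟨congrArg Sum.inl h0, fun s => Sum.inl_ne_inr⟩
      · exact ⟨congrArg Subtype.val h0, fun s => (q s).2⟩
    · rw [if_neg, if_neg]
      · rintro ⟨h, -⟩
        exact h0 (Sum.inl_injective h)
      · rintro ⟨h, -⟩
        exact h0 (Subtype.ext h)
  · -- p avoids inr off the image: zero
    rw [if_neg]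
    rintro ⟨-, hall⟩
    apply hp
    have : ∀ i, ∃ x : Sub, p i = Sum.inl x := by
      intro i
      rcases h : p i with x | u
      · exact ⟨x, rfl⟩
      · exact absurd h (by cases u; exact hall i)
    choose q hq using this
    exact Finset.mem_map.mpr ⟨q, Finset.mem_univ _, funext fun i => (hq i).symm⟩
  · rw [if_neg]
    rintro ⟨-, hall⟩
    apply hp
    exact Finset.mem_map.mpr ⟨fun i => ⟨p i, hall i⟩, Finset.mem_univ _, rfl⟩

/-- **Contraction lemma**: there is an absolute constant `C` such that for any
connected graph `H` on `n` vertices, nonempty proper vertex subset `S`, start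
`u ∉ S` and `T ≥ 1` with both walks within `n⁻³` of stationarity (stationary
probability `deg(y)/(2m)`, and `2m = Σ_v deg v`) at all times `t ≥ T`, the
probability that the lazy walk on `H` avoids `S` at all steps in `[T,t]`
differs from the probability that the lazy walk on `Γ` avoids `γ` at all steps
in `[T,t]` by at most `C/n²`. -/
theorem contraction_lemma :
    ∃ C : ℝ, 0 < C ∧
      ∀ (V : Type) [Fintype V] [DecidableEq V] (H : SimpleGraph V)
        (S : Finset V) (u : V) (hu : u ∉ S) (T : ℕ),
        H.Connected → S.Nonempty → S ≠ (univ : Finset V) → 1 ≤ T →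
        (∀ t, T ≤ t → ∀ x y : V,
          |((lazyH H) ^ t) x y - (degH H y : ℝ) / (∑ w : V, (degH H w : ℝ))| ≤
            ((Fintype.card V : ℝ) ^ 3)⁻¹) →
        (∀ t, T ≤ t → ∀ a b : {x : V // x ∉ S} ⊕ Unit,
          |((contractedLazyH H S) ^ t) a b -
              (degGamma H S b : ℝ) / (∑ w : V, (degH H w : ℝ))| ≤
            ((Fintype.card V : ℝ) ^ 3)⁻¹) →
        ∀ t, T ≤ t →
          |walkProb (lazyH H) u t
              (fun p => ∀ s : Fin (t + 1), T ≤ (s : ℕ) → p s ∉ S) -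
            walkProb (contractedLazyH H S) (Sum.inl ⟨u, hu⟩) t
              (fun p => ∀ s : Fin (t + 1), T ≤ (s : ℕ) → p s ≠ Sum.inr ())| ≤
          C / (Fintype.card V : ℝ) ^ 2 := by
  classical
  refine ⟨2, by norm_num, ?_⟩
  intro V _ _ H S u hu T hconn hSne hSuniv hT hH hΓ t ht
  obtain ⟨v, hv⟩ := hSne
  have hvu : v ≠ u := fun h => hu (h ▸ hv)
  have hdeg : ∀ x : V, 0 < degH H x := degH_pos H hconn hvu
  have hrow : ∀ x, ∑ y, lazyH H x y = 1 := fun x => lazyH_rowsum H x (hdeg x)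
  set n : ℝ := (Fintype.card V : ℝ) with hn
  have hn1 : (1 : ℝ) ≤ n := by
    have : 1 ≤ Fintype.card V := Fintype.card_pos_iff.mpr ⟨u⟩
    rw [hn]
    exact_mod_cast this
  have hn0 : (0 : ℝ) < n := lt_of_lt_of_le one_pos hn1
  set k := t - T with hk
  set g : V → ℝ := fun y => walkProb (lazyH H) y k (fun p => ∀ s : Fin (k+1), p s ∉ S)
    with hg
  -- decompositions
  rw [walkProb_decomp (lazyH H) (fun x => x ∉ S) T t ht u,
    walkProb_decomp (contractedLazyH H S) (fun b => b ≠ Sum.inr ()) T t ht (Sum.inl ⟨u, hu⟩)]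
  -- the H-side sum restricted to the complement of S
  have hgS : ∀ y ∈ S, g y = 0 := by
    intro y hyS
    exact walkProb_start_false _ y k fun p hp hE => (hE 0) (hp ▸ hyS)
  have hHsum : (∑ y : V, ((lazyH H) ^ T) u y * g y)
      = ∑ x : {x : V // x ∉ S}, ((lazyH H) ^ T) u x.1 * g x.1 := by
    rw [← Finset.sum_subtype (univ.filter (· ∉ S))
      (fun x => by simp) (fun y => ((lazyH H) ^ T) u y * g y)]
    rw [Finset.sum_filter]
    refine Finset.sum_congr rfl fun y _ => ?_
    by_cases hyS : y ∈ S
    · simp [hyS, hgS y hyS]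
    · simp [hyS]
  have hΓinr : walkProb (contractedLazyH H S) (Sum.inr ()) k
      (fun p => ∀ s : Fin (k+1), p s ≠ Sum.inr ()) = 0 :=
    walkProb_start_false _ _ k fun p hp hE => (hE 0) (by rw [hp])
  have hΓsum : (∑ b : {x : V // x ∉ S} ⊕ Unit, ((contractedLazyH H S) ^ T) (Sum.inl ⟨u, hu⟩) b *
        walkProb (contractedLazyH H S) b k (fun p => ∀ s : Fin (k+1), p s ≠ Sum.inr ()))
      = ∑ x : {x : V // x ∉ S}, ((contractedLazyH H S) ^ T) (Sum.inl ⟨u, hu⟩) (Sum.inl x) *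
          g x.1 := by
    rw [Fintype.sum_sum_type]
    have h2 : (∑ b : Unit, ((contractedLazyH H S) ^ T) (Sum.inl ⟨u, hu⟩) (Sum.inr b) *
        walkProb (contractedLazyH H S) (Sum.inr b) k
          (fun p => ∀ s : Fin (k+1), p s ≠ Sum.inr ())) = 0 := by
      simp [hΓinr]
    rw [h2, add_zero]
    refine Finset.sum_congr rfl fun x _ => ?_
    rw [hg]
    rw [← walkProb_contract H S x.1 x.2 k]
  rw [hHsum, hΓsum, ← Finset.sum_sub_distrib]
  -- bound each term
  have hgnn : ∀ y, 0 ≤ g y := fun y => walkProb_nonneg _ (lazyH_nonneg H) _ _ _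
  have hgle : ∀ y, g y ≤ 1 := by
    intro y
    calc g y ≤ walkProb (lazyH H) y k (fun _ => True) :=
          walkProb_mono _ (lazyH_nonneg H) _ _ (fun p _ => trivial)
      _ = 1 := walkProb_true _ hrow k y
  have hterm : ∀ x : {x : V // x ∉ S},
      |((lazyH H) ^ T) u x.1 * g x.1 -
        ((contractedLazyH H S) ^ T) (Sum.inl ⟨u, hu⟩) (Sum.inl x) * g x.1| ≤ 2 * (n ^ 3)⁻¹ := by
    intro x
    have hA := hH T le_rfl u x.1
    have hB := hΓ T le_rfl (Sum.inl ⟨u, hu⟩) (Sum.inl x)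
    have hBg : degGamma H S (Sum.inl x) = degH H x.1 := rfl
    rw [hBg] at hB
    have habs : |((lazyH H) ^ T) u x.1 -
        ((contractedLazyH H S) ^ T) (Sum.inl ⟨u, hu⟩) (Sum.inl x)| ≤ 2 * (n ^ 3)⁻¹ := by
      calc |((lazyH H) ^ T) u x.1 - ((contractedLazyH H S) ^ T) (Sum.inl ⟨u, hu⟩) (Sum.inl x)|
          ≤ |((lazyH H) ^ T) u x.1 - (degH H x.1 : ℝ) / (∑ w : V, (degH H w : ℝ))| +
            |((contractedLazyH H S) ^ T) (Sum.inl ⟨u, hu⟩) (Sum.inl x) -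
              (degH H x.1 : ℝ) / (∑ w : V, (degH H w : ℝ))| := by
            have h3 := abs_sub_le ((lazyH H ^ T) u x.1)
              ((degH H x.1 : ℝ) / ∑ w : V, (degH H w : ℝ))
              (((contractedLazyH H S) ^ T) (Sum.inl ⟨u, hu⟩) (Sum.inl x))
            rwa [abs_sub_comm ((degH H x.1 : ℝ) / ∑ w : V, (degH H w : ℝ))] at h3
        _ ≤ (n ^ 3)⁻¹ + (n ^ 3)⁻¹ := add_le_add hA hB
        _ = 2 * (n ^ 3)⁻¹ := by ring
    rw [← sub_mul, abs_mul]
    calc |((lazyH H) ^ T) u x.1 - ((contractedLazyH H S) ^ T) (Sum.inl ⟨u, hu⟩) (Sum.inl x)| *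
          |g x.1| ≤ (2 * (n ^ 3)⁻¹) * 1 := by
          apply mul_le_mul habs _ (abs_nonneg _) (by positivity)
          rw [abs_of_nonneg (hgnn x.1)]
          exact hgle x.1
      _ = 2 * (n ^ 3)⁻¹ := mul_one _
  calc |∑ x : {x : V // x ∉ S}, (((lazyH H) ^ T) u x.1 * g x.1 -
        ((contractedLazyH H S) ^ T) (Sum.inl ⟨u, hu⟩) (Sum.inl x) * g x.1)|
      ≤ ∑ x : {x : V // x ∉ S}, |((lazyH H) ^ T) u x.1 * g x.1 -
        ((contractedLazyH H S) ^ T) (Sum.inl ⟨u, hu⟩) (Sum.inl x) * g x.1| :=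
        Finset.abs_sum_le_sum_abs _ _
    _ ≤ ∑ _x : {x : V // x ∉ S}, 2 * (n ^ 3)⁻¹ := Finset.sum_le_sum fun x _ => hterm x
    _ = (Fintype.card {x : V // x ∉ S} : ℝ) * (2 * (n ^ 3)⁻¹) := by
        rw [Finset.sum_const, Finset.card_univ, nsmul_eq_mul]
    _ ≤ n * (2 * (n ^ 3)⁻¹) := by
        apply mul_le_mul_of_nonneg_right _ (by positivity)
        rw [hn]
        exact_mod_cast Fintype.card_subtype_le _
    _ = 2 / n ^ 2 := by
        field_simp

end
end

section
/- Let G be a d-regular simple graph satisfying property P3 with constant ρ₂ for some ε ∈ (0,1), and suppose d^{ε/2} ≥ 4·ρ₂. Let U be a set of vertices and v ∈ U, and suppose that every vertex at graph distance at most ⌊d^{ε/2}⌋ from v has at least d^ε/2 neighbours in U. Then the connected component of v in the subgraph of G induced by U has at least (d^{ε/2}/(4·ρ₂))^{⌊d^{ε/2}/2⌋} vertices. -/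
open Finset Filter

noncomputable section
open scoped Classical

variable {V : Type*} [Fintype V] [DecidableEq V]

/-- **Lemma 9 (deterministic expansion)**: in a `d`-regular graph satisfying P3
with constant `ρ₂` (for some `ε ∈ (0,1)`) and with `d^(ε/2) ≥ 4ρ₂`, if `v ∈ U`
and every vertex within distance `⌊d^(ε/2)⌋` of `v` has at least `d^ε/2`
neighbours in `U`, then the connected component of `v` in the subgraph induced
by `U` has at least `(d^(ε/2)/(4ρ₂))^⌊d^(ε/2)/2⌋` vertices. -/
theorem induced_component_lower_bound (G : SimpleGraph V) (d : ℕ) (ε ρ₂ : ℝ)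
    (hε : 0 < ε ∧ ε < 1) (hρ₂ : 0 < ρ₂)
    (hreg : G.IsRegularOfDegree d)
    (hP3 : PropP3 G d ε ρ₂)
    (hd : 4 * ρ₂ ≤ (d : ℝ) ^ (ε / 2))
    (U : Set V) (v : V) (hv : v ∈ U)
    (hU : ∀ w : V, G.dist v w ≤ Nat.floor ((d : ℝ) ^ (ε / 2)) →
      (d : ℝ) ^ ε / 2 ≤ (((univ : Finset V).filter fun x => G.Adj w x ∧ x ∈ U).card : ℝ)) :
    ((d : ℝ) ^ (ε / 2) / (4 * ρ₂)) ^ (Nat.floor ((d : ℝ) ^ (ε / 2) / 2)) ≤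
      ((((G.induce U).connectedComponentMk ⟨v, hv⟩).supp).ncard : ℝ) := by
  classical
  obtain ⟨hε0, hε1⟩ := hε
  -- basic facts about d
  have hdpos : (0:ℝ) < (d : ℝ) ^ (ε / 2) := by
    rcases Nat.eq_zero_or_pos d with h0 | h0
    · exfalso
      rw [h0] at hd
      simp only [Nat.cast_zero] at hd
      rw [Real.zero_rpow (by positivity : ε / 2 ≠ 0)] at hd
      linarith
    · have : (0:ℝ) < (d:ℝ) := by exact_mod_cast h0
      positivity
  have hd1 : (1:ℝ) ≤ (d:ℝ) := by
    rcases Nat.eq_zero_or_pos d with h0 | h0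
    · exfalso
      rw [h0] at hd
      simp only [Nat.cast_zero] at hd
      rw [Real.zero_rpow (by positivity : ε / 2 ≠ 0)] at hd
      linarith
    · exact_mod_cast h0
  set A : ℝ := (d : ℝ) ^ (ε / 2) with hA
  set E : ℝ := (d : ℝ) ^ ε with hE
  have hAE : A * A = E := by
    rw [hA, hE, ← Real.rpow_add (by linarith : (0:ℝ) < (d:ℝ))]
    norm_num
  have hAleE : A ≤ E := Real.rpow_le_rpow_of_exponent_le hd1 (by linarith)
  set K : ℕ := Nat.floor ((d : ℝ) ^ (ε / 2) / 2) with hK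
  set R : ℕ := Nat.floor ((d : ℝ) ^ (ε / 2)) with hR
  have hKR : K ≤ R := Nat.floor_le_floor (by linarith)
  have hKle : (K : ℝ) ≤ A / 2 := Nat.floor_le (by positivity)
  set r : ℝ := A / (4 * ρ₂) with hr
  have hr1 : (1:ℝ) ≤ r := by
    rw [hr, le_div_iff₀ (by positivity)]
    linarith
  -- the component predicate and levels
  set Comp : V → Prop := fun x => ∃ hx : x ∈ U, (G.induce U).Reachable ⟨v, hv⟩ ⟨x, hx⟩
    with hComp
  set L : ℕ → Finset V :=
    fun k => (univ : Finset V).filter (fun x => Comp x ∧ G.dist v x = k) with hL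
  -- reachability in G from the component
  have hreachG : ∀ x : V, Comp x → G.Reachable v x := by
    rintro x ⟨hx, hre⟩
    have := hre.map (SimpleGraph.Embedding.induce U).toHom
    simpa using this
  -- distance grows by at most 1 along edges
  have hdist_step : ∀ w x : V, G.Reachable v w → G.Adj w x →
      G.dist v x ≤ G.dist v w + 1 := by
    intro w x hre hadj
    obtain ⟨p, hp⟩ := hre.exists_walk_length_eq_dist
    have := SimpleGraph.dist_le (p.concat hadj)
    rwa [SimpleGraph.Walk.length_concat, hp] at this
  -- the key counting step
  have hstep : ∀ k : ℕ, k + 1 ≤ K →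
      ((L k).card : ℝ) * (E / 2 - ρ₂ * k) ≤ ((L (k+1)).card : ℝ) * (ρ₂ * (k+1)) := by
    intro k hk1
    have hkK : (k : ℝ) + 1 ≤ (K : ℝ) := by exact_mod_cast hk1
    have hkE : (k : ℝ) ≤ E := by nlinarith
    have hk1E : (k : ℝ) + 1 ≤ E := by nlinarith
    -- lower bound: each w in L k has many neighbours in L (k+1)
    have hlow : ∀ w ∈ L k,
        E / 2 - ρ₂ * k ≤ (((L (k+1)).filter (fun x => G.Adj w x)).card : ℝ) := by
      intro w hw
      simp only [hL, mem_filter, mem_univ, true_and] at hw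
      obtain ⟨hwC, hwd⟩ := hw
      obtain ⟨hwU, hwre⟩ := hwC
      have hreG : G.Reachable v w := hreachG w ⟨hwU, hwre⟩
      -- w is within distance R of v
      have hUw : (d : ℝ) ^ ε / 2 ≤
          ((((univ : Finset V).filter fun x => G.Adj w x ∧ x ∈ U).card : ℝ)) := by
        apply hU
        rw [hwd]; omega
      -- P3 bound on close neighbours of w
      have hP3w : (((univ : Finset V).filter
          (fun x => G.Adj w x ∧ G.dist x v ≤ k)).card : ℝ) ≤ ρ₂ * k := by
        have h := hP3 v w (by rw [hwd]; nlinarith)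
        rw [hwd] at h
        exact h
      set Aw := (univ : Finset V).filter (fun x => G.Adj w x ∧ x ∈ U) with hAw
      set Bw := (univ : Finset V).filter
          (fun x => G.Adj w x ∧ G.dist x v ≤ k) with hBw
      have hsub : Aw \ Bw ⊆ (L (k+1)).filter (fun x => G.Adj w x) := by
        intro x hx
        rw [Finset.mem_sdiff] at hx
        obtain ⟨hx1, hx2⟩ := hx
        simp only [hAw, mem_filter, mem_univ, true_and] at hx1
        obtain ⟨hadj, hxU⟩ := hx1
        simp only [hBw, mem_filter, mem_univ, true_and, not_and, not_le] at hx2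
        have hgt := hx2 hadj
        have hle : G.dist v x ≤ k + 1 := by
          have := hdist_step w x hreG hadj
          omega
        have hgt' : k < G.dist v x := by
          rwa [SimpleGraph.dist_comm (u := x) (v := v)] at hgt
        have hdx : G.dist v x = k + 1 := by omega
        have hCx : Comp x := by
          refine ⟨hxU, hwre.trans ?_⟩
          exact SimpleGraph.Adj.reachable (by simpa using hadj)
        simp only [mem_filter, mem_univ, true_and, hL]
        exact ⟨⟨hCx, hdx⟩, hadj⟩
      have hcard : ((Aw \ Bw).card : ℝ) ≥ E / 2 - ρ₂ * k := by
        have h1 : Aw.card - Bw.card ≤ (Aw \ Bw).card := Finset.le_card_sdiff _ _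
        have h2 : (Aw.card : ℝ) - Bw.card ≤ ((Aw \ Bw).card : ℝ) := by
          have h3 : Aw.card ≤ (Aw \ Bw).card + Bw.card := by omega
          have h4 : (Aw.card : ℝ) ≤ ((Aw \ Bw).card : ℝ) + (Bw.card : ℝ) := by
            exact_mod_cast h3
          linarith
        have h5 : E / 2 ≤ (Aw.card : ℝ) := hUw
        linarith
      calc E / 2 - ρ₂ * k ≤ ((Aw \ Bw).card : ℝ) := hcard
        _ ≤ _ := by exact_mod_cast Finset.card_le_card hsub
    -- upper bound: each x in L (k+1) has few neighbours in L k
    have hhigh : ∀ x ∈ L (k+1),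
        (((L k).filter (fun w => G.Adj w x)).card : ℝ) ≤ ρ₂ * (k+1) := by
      intro x hx
      simp only [hL, mem_filter, mem_univ, true_and] at hx
      obtain ⟨hxC, hxd⟩ := hx
      have hP3x : (((univ : Finset V).filter
          (fun w => G.Adj x w ∧ G.dist w v ≤ k + 1)).card : ℝ) ≤ ρ₂ * (k+1) := by
        have h := hP3 v x (by rw [hxd]; push_cast; nlinarith)
        rw [hxd] at h
        push_cast at h ⊢
        linarith
      refine le_trans ?_ hP3x
      have hsub : (L k).filter (fun w => G.Adj w x) ⊆
          (univ : Finset V).filter (fun w => G.Adj x w ∧ G.dist w v ≤ k + 1) := by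
        intro w hw
        simp only [hL, mem_filter, mem_univ, true_and] at hw ⊢
        obtain ⟨⟨hwC, hwd⟩, hadj⟩ := hw
        refine ⟨hadj.symm, ?_⟩
        rw [SimpleGraph.dist_comm (u := w) (v := v), hwd]
        omega
      exact_mod_cast Finset.card_le_card hsub
    -- double counting
    have hdouble : ∑ w ∈ L k, (((L (k+1)).filter (fun x => G.Adj w x)).card : ℝ)
        = ∑ x ∈ L (k+1), (((L k).filter (fun w => G.Adj w x)).card : ℝ) := by
      simp only [Finset.card_filter]
      push_cast
      rw [Finset.sum_comm]
    calc ((L k).card : ℝ) * (E / 2 - ρ₂ * k)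
        ≤ ∑ w ∈ L k, (((L (k+1)).filter (fun x => G.Adj w x)).card : ℝ) := by
          have := Finset.card_nsmul_le_sum (L k)
            (fun w => (((L (k+1)).filter (fun x => G.Adj w x)).card : ℝ))
            (E / 2 - ρ₂ * k) hlow
          simpa [nsmul_eq_mul, mul_comm] using this
      _ = ∑ x ∈ L (k+1), (((L k).filter (fun w => G.Adj w x)).card : ℝ) := hdouble
      _ ≤ ((L (k+1)).card : ℝ) * (ρ₂ * (k+1)) := by
          have := Finset.sum_le_card_nsmul (L (k+1))
            (fun x => (((L k).filter (fun w => G.Adj w x)).card : ℝ))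
            (ρ₂ * (k+1)) hhigh
          simpa [nsmul_eq_mul, mul_comm] using this
  -- the growth induction
  have hgrow : ∀ k : ℕ, k ≤ K → r ^ k ≤ ((L k).card : ℝ) := by
    intro k
    induction k with
    | zero =>
      intro _
      have hv0 : v ∈ L 0 := by
        simp only [hL, mem_filter, mem_univ, true_and]
        exact ⟨⟨hv, SimpleGraph.Reachable.refl _⟩, SimpleGraph.dist_self⟩
      have : 1 ≤ (L 0).card := Finset.card_pos.mpr ⟨v, hv0⟩
      simpa using (by exact_mod_cast this : (1:ℝ) ≤ ((L 0).card : ℝ))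
    | succ k ih =>
      intro hk1
      have hk : k ≤ K := by omega
      have hLk := ih hk
      have hkK : (k : ℝ) + 1 ≤ (K : ℝ) := by exact_mod_cast hk1
      have hkey : r * (ρ₂ * (k+1)) ≤ E / 2 - ρ₂ * k := by
        have h1 : r * (ρ₂ * (k+1)) = A * ((k:ℝ)+1) / 4 := by
          rw [hr]; field_simp
        rw [h1]
        have h2 : ((k:ℝ)+1) ≤ A / 2 := by linarith
        have h3 : (k:ℝ) ≤ A / 2 := by linarith
        nlinarith [hdpos, hρ₂.le]
      have hs := hstep k hk1
      have hpos : (0:ℝ) < ρ₂ * (k+1) := by positivity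
      have hcard : r * ((L k).card : ℝ) ≤ ((L (k+1)).card : ℝ) := by
        have h1 : r * ((L k).card : ℝ) * (ρ₂ * (k+1)) ≤
            ((L (k+1)).card : ℝ) * (ρ₂ * (k+1)) := by
          calc r * ((L k).card : ℝ) * (ρ₂ * (k+1))
              = ((L k).card : ℝ) * (r * (ρ₂ * (k+1))) := by ring
            _ ≤ ((L k).card : ℝ) * (E / 2 - ρ₂ * k) := by
                apply mul_le_mul_of_nonneg_left hkey
                positivity
            _ ≤ _ := hs
        exact le_of_mul_le_mul_right h1 hpos
      calc r ^ (k+1) = r * r ^ k := by ring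
        _ ≤ r * ((L k).card : ℝ) := by
            apply mul_le_mul_of_nonneg_left hLk (by linarith)
        _ ≤ _ := hcard
  -- relate L K to the component support
  have hfinal : ((L K).card : ℝ) ≤
      ((((G.induce U).connectedComponentMk ⟨v, hv⟩).supp).ncard : ℝ) := by
    set S := (((G.induce U).connectedComponentMk ⟨v, hv⟩).supp) with hS
    have hSn : S.ncard = S.toFinset.card := Set.ncard_eq_toFinset_card' S
    rw [hSn]
    have hle : (L K).card ≤ S.toFinset.card := by
      apply Finset.card_le_card_of_injOn
        (fun x => if h : x ∈ U then (⟨x, h⟩ : U) else ⟨v, hv⟩)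
      · intro x hx
        simp only [hL, Finset.mem_coe, mem_filter, mem_univ, true_and] at hx
        obtain ⟨⟨hxU, hxre⟩, _⟩ := hx
        simp only [Finset.mem_coe]
        rw [dif_pos hxU, Set.mem_toFinset, hS,
          SimpleGraph.ConnectedComponent.mem_supp_iff]
        exact SimpleGraph.ConnectedComponent.sound hxre.symm
      · intro x hx y hy hxy
        simp only [hL, Finset.coe_filter, Set.mem_setOf_eq] at hx hy
        obtain ⟨_, ⟨hxU, _⟩, _⟩ := hx
        obtain ⟨_, ⟨hyU, _⟩, _⟩ := hy
        have hxy' : (⟨x, hxU⟩ : U) = ⟨y, hyU⟩ := by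
          simpa [dif_pos hxU, dif_pos hyU] using hxy
        exact congrArg Subtype.val hxy' 
    exact_mod_cast hle
  exact le_trans (hgrow K le_rfl) hfinal

end
end
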